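/- arXiv:2312.11744 — 7 statements merged into one kernel-verified Lean document; each statement's English description precedes it below -/
import Mathlib

section
/- Let k ≥ 2 be a prime power and let π be a permutation of the finite field F_k. Then there exists a polynomial f ∈ F_k[x,y] of total degree ⌊k/2⌋ such that f(c, π(c)) = 0 for all c ∈ F_k. -/
-- parity lemma: a fixed-point-free involution on a finset forces even cardinality
lemma even_card_of_fpf {α : Type*} [DecidableEq α] :
    ∀ (n : ℕ) (s : Finset α), s.card = n → ∀ f : α → α,
      (∀ a ∈ s, f a ∈ s) → (∀ a ∈ s, f (f a) = a) → (∀ a ∈ s, f a ≠ a) → Even n := by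
  intro n
  induction n using Nat.strong_induction_on with
  | _ n ih =>
    intro s hs f hmem hinv hne
    rcases Finset.eq_empty_or_nonempty s with rfl | ⟨a, ha⟩
    · simp at hs; simp [← hs]
    · have hfa : f a ∈ s := hmem a ha
      have hfa' : f a ≠ a := hne a ha
      set s' := s \ {a, f a} with hs'
      have hsub : {a, f a} ⊆ s := by
        intro x hx; simp at hx; rcases hx with rfl | rfl <;> assumption
      have hcard : s'.card = n - 2 := by
        rw [hs', Finset.card_sdiff_of_subset hsub, Finset.card_pair (Ne.symm hfa'), hs]
      have h2 : 2 ≤ n := by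
        have := Finset.card_le_card hsub
        rw [Finset.card_pair (Ne.symm hfa'), hs] at this; exact this
      have hrec : Even (n - 2) := by
        refine ih (n-2) (by omega) s' hcard f ?_ ?_ ?_
        · intro b hb
          simp only [hs', Finset.mem_sdiff, Finset.mem_insert, Finset.mem_singleton] at hb ⊢
          obtain ⟨hbs, hb2⟩ := hb
          push_neg at hb2 ⊢
          refine ⟨hmem b hbs, ?_, ?_⟩
          · intro h; exact hb2.2 (by rw [← hinv b hbs, h])
          · intro h
            have := hinv a ha
            have : b = a := by
              have h2 := congrArg f h
              rw [hinv b hbs, hinv a ha] at h2; exact h2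
            exact hb2.1 this
        · intro b hb; exact hinv b (Finset.mem_sdiff.mp hb).1
        · intro b hb; exact hne b (Finset.mem_sdiff.mp hb).1
      obtain ⟨t, ht⟩ := hrec
      exact ⟨t + 1, by omega⟩

open MvPolynomial Finset

noncomputable def lin {F : Type} [Field F] (a b c : F) : MvPolynomial (Fin 2) F :=
  C a * X 0 + C b * X 1 + C c
lemma lin_eval {F : Type} [Field F] (a b c x y : F) :
    MvPolynomial.eval ![x, y] (lin a b c) = a * x + b * y + c := by
  simp [lin]

lemma lin_deg {F : Type} [Field F] (a b c : F) : (lin a b c).totalDegree ≤ 1 := by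
  refine (totalDegree_add _ _).trans ?_
  simp only [max_le_iff]
  constructor
  · refine (totalDegree_add _ _).trans ?_
    simp only [max_le_iff]
    constructor <;>
    · refine (totalDegree_mul _ _).trans ?_
      simp [totalDegree_C, totalDegree_X]
  · simp [totalDegree_C]

lemma single_sum (n : ℕ) : (Finsupp.single (1 : Fin 2) n).sum (fun _ e => e) = n := by
  simp [Finsupp.sum_single_index]

lemma coeff_lin_mul {F : Type} [Field F] (a b c : F) (f : MvPolynomial (Fin 2) F) (n : ℕ)
    (hf : f.totalDegree ≤ n) :
    MvPolynomial.coeff (Finsupp.single 1 (n + 1)) (lin a b c * f)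
      = b * MvPolynomial.coeff (Finsupp.single 1 n) f := by
  have h : lin a b c * f = C a * (f * X 0) + (C b * (f * X 1) + C c * f) := by
    unfold lin; ring
  rw [h]
  have h0 : (0 : Fin 2) ∉ (Finsupp.single (1 : Fin 2) (n+1)).support := by
    simp [Finsupp.mem_support_iff]
  have h1 : (1 : Fin 2) ∈ (Finsupp.single (1 : Fin 2) (n+1)).support := by
    simp [Finsupp.mem_support_iff]
  have hsub : Finsupp.single (1 : Fin 2) (n+1) - Finsupp.single 1 1 = Finsupp.single 1 n := by
    ext i
    by_cases hi : i = 1 <;> simp [Finsupp.single_apply, hi]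
  have hc : MvPolynomial.coeff (Finsupp.single (1 : Fin 2) (n+1)) f = 0 := by
    apply coeff_eq_zero_of_totalDegree_lt
    simp only [Finsupp.support_single_ne_zero _ (Nat.succ_ne_zero n), Finset.sum_singleton,
      Finsupp.single_eq_same]
    omega
  rw [coeff_add, coeff_add, coeff_C_mul, coeff_C_mul, coeff_C_mul,
    coeff_mul_X', coeff_mul_X', if_neg h0, if_pos h1, hsub, hc]
  ring
lemma cover {F : Type} [Field F] [Fintype F] [DecidableEq F] (π : F → F) :
    ∀ (n : ℕ) (S : Finset F), S.card = 2 * n →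
    ∃ f : MvPolynomial (Fin 2) F, f.totalDegree ≤ n ∧
      MvPolynomial.coeff (Finsupp.single 1 n) f ≠ 0 ∧
      ∀ c ∈ S, MvPolynomial.eval ![c, π c] f = 0 := by
  intro n
  induction n with
  | zero =>
    intro S hS
    have : S = ∅ := Finset.card_eq_zero.mp (by omega)
    subst this
    exact ⟨1, by simp, by simp, by simp⟩
  | succ n ih =>
    intro S hS
    obtain ⟨a, ha, b, hb, hab⟩ := Finset.one_lt_card.mp (by omega : 1 < S.card)
    have hsub : {a, b} ⊆ S := by
      intro x hx; simp at hx; rcases hx with rfl | rfl <;> assumption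
    obtain ⟨f', hdeg, hcoeff, hvan⟩ := ih (S \ {a, b}) (by
      rw [Finset.card_sdiff_of_subset hsub, Finset.card_pair hab, hS]; omega)
    refine ⟨lin (π a - π b) (b - a) ((π b - π a) * a - (b - a) * π a) * f', ?_, ?_, ?_⟩
    · refine (totalDegree_mul _ _).trans ?_
      have := lin_deg (π a - π b) (b - a) ((π b - π a) * a - (b - a) * π a)
      omega
    · rw [coeff_lin_mul _ _ _ _ _ hdeg]
      exact mul_ne_zero (sub_ne_zero.mpr (Ne.symm hab)) hcoeff
    · intro c hc
      rw [map_mul, lin_eval]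
      by_cases hca : c = a
      · subst hca; rw [mul_eq_zero]; left; ring
      by_cases hcb : c = b
      · subst hcb; rw [mul_eq_zero]; left; ring
      · rw [hvan c (by simp [Finset.mem_sdiff, hc, hca, hcb]), mul_zero]
lemma exists_triple {F : Type} [Field F] [Fintype F] [DecidableEq F]
    (hodd : Odd (Fintype.card F)) (h3 : 3 ≤ Fintype.card F) (π : Equiv.Perm F) :
    ∃ m i j l : F, i ≠ j ∧ i ≠ l ∧ j ≠ l ∧
      π j - π i = m * (j - i) ∧ π l - π i = m * (l - i) := by
  by_contra hcon
  push_neg at hcon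
  set k := Fintype.card F with hk
  set s : F × F → F := fun p => (π p.2 - π p.1) / (p.2 - p.1) with hs
  -- partition of offDiag by slope
  have hsum : (univ : Finset F).offDiag.card
      = ∑ m ∈ (univ : Finset F), ((univ : Finset F).offDiag.filter (fun p => s p = m)).card :=
    Finset.card_eq_sum_card_fiberwise (fun p _ => mem_univ _)
  have hoff : (univ : Finset F).offDiag.card = k * k - k := by
    rw [Finset.offDiag_card]; simp [hk]
  -- slope equation characterization
  have hslope : ∀ m : F, ∀ p : F × F, p.1 ≠ p.2 →
      (s p = m ↔ π p.2 - π p.1 = m * (p.2 - p.1)) := by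
    intro m p hp
    rw [hs]
    exact div_eq_iff (sub_ne_zero.mpr (Ne.symm hp))
  -- the zero-slope fiber is empty
  have hzero : ((univ : Finset F).offDiag.filter (fun p => s p = 0)).card = 0 := by
    rw [Finset.card_eq_zero, Finset.filter_eq_empty_iff]
    rintro p hp
    rw [Finset.mem_offDiag] at hp
    rw [hslope 0 p hp.2.2]
    intro h
    rw [zero_mul, sub_eq_zero] at h
    exact hp.2.2 (π.injective h).symm
  -- each nonzero fiber has card ≤ k - 1
  have hbound : ∀ m : F, ((univ : Finset F).offDiag.filter (fun p => s p = m)).card ≤ k - 1 := by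
    intro m
    set T := (univ : Finset F).offDiag.filter (fun p => s p = m) with hT
    -- the defining property, in linear form
    have hmemT : ∀ p : F × F, p ∈ T ↔ p.1 ≠ p.2 ∧ π p.2 - π p.1 = m * (p.2 - p.1) := by
      intro p
      rw [hT, Finset.mem_filter, Finset.mem_offDiag]
      constructor
      · rintro ⟨⟨-, -, h1⟩, h2⟩; exact ⟨h1, (hslope m p h1).mp h2⟩
      · rintro ⟨h1, h2⟩; exact ⟨⟨mem_univ _, mem_univ _, h1⟩, (hslope m p h1).mpr h2⟩
    -- T ≤ k : fiberwise over first coordinate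
    have hTk : T.card ≤ k := by
      have := Finset.card_eq_sum_card_fiberwise
        (f := fun p : F × F => p.1) (s := T) (t := (univ : Finset F)) (fun p _ => mem_univ _)
      rw [this]
      have : ∀ i ∈ (univ : Finset F), (T.filter (fun p => p.1 = i)).card ≤ 1 := by
        intro i _
        rw [Finset.card_le_one]
        rintro ⟨i1, j1⟩ hj1 ⟨i2, j2⟩ hj2
        rw [Finset.mem_filter] at hj1 hj2
        obtain ⟨hm1, hi1⟩ := hj1
        obtain ⟨hm2, hi2⟩ := hj2
        simp only at hi1 hi2
        have hii : i1 = i2 := hi1.trans hi2.symm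
        subst hii
        rw [hmemT] at hm1 hm2
        simp only at hm1 hm2
        by_contra hne
        have hj12 : j1 ≠ j2 := by
          intro h; apply hne; rw [h]
        exact hcon m i1 j1 j2 (hm1.1) (hm2.1) hj12 hm1.2 hm2.2
      calc ∑ i ∈ univ, (T.filter (fun p => p.1 = i)).card
          ≤ ∑ _i ∈ (univ : Finset F), 1 := Finset.sum_le_sum this
        _ = k := by simp [hk]
    -- T has even card via the swap involution
    have hTeven : Even T.card := by
      refine even_card_of_fpf T.card T rfl (fun p => (p.2, p.1)) ?_ ?_ ?_
      · intro p hp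
        rw [hmemT] at hp ⊢
        refine ⟨Ne.symm hp.1, ?_⟩
        have := hp.2
        simp only
        linear_combination -this
      · intro p _; rfl
      · intro p hp h
        rw [hmemT] at hp
        exact hp.1 (congrArg Prod.fst h).symm
    obtain ⟨t, ht⟩ := hTeven
    obtain ⟨u, hu⟩ := hodd
    omega
  -- combine
  have : k * k - k ≤ (k - 1) * (k - 1) := by
    rw [← hoff, hsum]
    have h0univ : (0 : F) ∈ (univ : Finset F) := mem_univ _
    rw [← Finset.add_sum_erase _ _ h0univ, hzero, zero_add]
    calc ∑ m ∈ univ.erase 0, ((univ : Finset F).offDiag.filter (fun p => s p = m)).card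
        ≤ ∑ _m ∈ (univ : Finset F).erase 0, (k - 1) :=
          Finset.sum_le_sum (fun m _ => hbound m)
      _ = (k - 1) * (k - 1) := by
          rw [Finset.sum_const, Finset.card_erase_of_mem h0univ, Finset.card_univ, smul_eq_mul]
  obtain ⟨q, hq⟩ : ∃ q, k = q + 3 := ⟨k - 3, by omega⟩
  rw [hq] at this
  have e : (q+3)*(q+3) = q*q+6*q+9 := by ring
  have e2 : (q+3-1)*(q+3-1) = q*q+4*q+4 := by
    have : q+3-1 = q+2 := by omega
    rw [this]; ring
  rw [e, e2] at this
  omega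

/-- For a prime power `k ≥ 2` and a permutation `π` of the field with `k`
elements, there is a polynomial `f ∈ F_k[x,y]` of total degree `⌊k/2⌋` with
`f(c, π c) = 0` for all `c`. -/
theorem stmt_0 (k : ℕ) (hk : 2 ≤ k) (hpp : IsPrimePow k)
    (F : Type) [Field F] [Fintype F] (hcard : Fintype.card F = k)
    (π : Equiv.Perm F) :
    ∃ f : MvPolynomial (Fin 2) F,
      f.totalDegree = k / 2 ∧ ∀ c : F, MvPolynomial.eval ![c, π c] f = 0 := by
  classical
  subst hcard
  set k := Fintype.card F with hkdef
  have hk2 : 2 ≤ k := hk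
  rcases Nat.even_or_odd k with he | ho
  · obtain ⟨t, ht⟩ := he
    obtain ⟨f, hdeg, hcoeff, hvan⟩ := cover (⇑π) t univ (by rw [Finset.card_univ, ← hkdef]; omega)
    refine ⟨f, ?_, fun c => hvan c (mem_univ c)⟩
    have hge : t ≤ f.totalDegree := by
      have hsupp : Finsupp.single (1 : Fin 2) t ∈ f.support := by
        rwa [MvPolynomial.mem_support_iff]
      have h2 := MvPolynomial.le_totalDegree hsupp
      rwa [single_sum] at h2
    have : f.totalDegree = t := le_antisymm hdeg hge
    omega
  · have h3 : 3 ≤ k := by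
      obtain ⟨u, hu⟩ := ho; omega
    obtain ⟨m, i, j, l, hij, hil, hjl, h1, h2⟩ := exists_triple ho h3 π
    set S : Finset F := univ \ {i, j, l} with hS
    have hcard3 : ({i, j, l} : Finset F).card = 3 := by
      rw [Finset.card_insert_of_notMem (by simp [hij, hil]), Finset.card_pair hjl]
    have hScard : S.card = 2 * ((k - 3) / 2) := by
      rw [hS, Finset.card_sdiff_of_subset (Finset.subset_univ _), hcard3, Finset.card_univ, ← hkdef]
      obtain ⟨u, hu⟩ := ho; omega
    obtain ⟨f', hdeg, hcoeff, hvan⟩ := cover (⇑π) ((k - 3) / 2) S hScard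
    set n := (k - 3) / 2 with hn
    refine ⟨lin (-m) 1 (m * i - π i) * f', ?_, ?_⟩
    · have hle : (lin (-m) 1 (m * i - π i) * f').totalDegree ≤ n + 1 := by
        refine (totalDegree_mul _ _).trans ?_
        have := lin_deg (-m) 1 (m * i - π i)
        omega
      have hco : MvPolynomial.coeff (Finsupp.single 1 (n + 1))
          (lin (-m) 1 (m * i - π i) * f') ≠ 0 := by
        rw [coeff_lin_mul _ _ _ _ _ hdeg, one_mul]
        exact hcoeff
      have hge : n + 1 ≤ (lin (-m) 1 (m * i - π i) * f').totalDegree := by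
        have hsupp : Finsupp.single (1 : Fin 2) (n + 1)
            ∈ (lin (-m) 1 (m * i - π i) * f').support := by
          rwa [MvPolynomial.mem_support_iff]
        have h2 := MvPolynomial.le_totalDegree hsupp
        rwa [single_sum] at h2
      have heq : (lin (-m) 1 (m * i - π i) * f').totalDegree = n + 1 := le_antisymm hle hge
      rw [heq, hn]
      obtain ⟨u, hu⟩ := ho; omega
    · intro c
      rw [map_mul, lin_eval]
      by_cases hci : c = i
      · subst hci; rw [mul_eq_zero]; left; ring
      by_cases hcj : c = j
      · subst hcj; rw [mul_eq_zero]; left; linear_combination h1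
      by_cases hcl : c = l
      · subst hcl; rw [mul_eq_zero]; left; linear_combination h2
      · rw [hvan c (by simp [hS, hci, hcj, hcl]), mul_zero]
end

section
/- Let k ≥ 3 be a prime power, π a permutation of F_k, and (a,b) ∈ F_k × F_k with π(a) ≠ b. Then there exists a polynomial f ∈ F_k[x,y] of total degree k−2 such that f(c, π(c)) = 0 for all c ∈ F_k and f(a,b) ≠ 0. -/
open MvPolynomial Finset

lemma coeff_single_top_mul {σ F : Type*} [CommRing F] [DecidableEq σ] (j : σ)
    (p q : MvPolynomial σ F) {m n : ℕ} (hp : p.totalDegree ≤ m) (hq : q.totalDegree ≤ n) :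
    (p * q).coeff (Finsupp.single j (m + n)) =
      p.coeff (Finsupp.single j m) * q.coeff (Finsupp.single j n) := by
  rw [MvPolynomial.coeff_mul]
  refine Finset.sum_eq_single (Finsupp.single j m, Finsupp.single j n) ?_ ?_
  · rintro ⟨d₁, d₂⟩ hmem hne
    rw [Finset.HasAntidiagonal.mem_antidiagonal] at hmem
    have hsupp : ∀ x, x ≠ j → d₁ x = 0 ∧ d₂ x = 0 := by
      intro x hx
      have := congrArg (fun f => f x) hmem
      simp [Finsupp.single_apply, hx.symm] at this
      omega
    have hd₁ : d₁ = Finsupp.single j (d₁ j) := by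
      ext x
      by_cases hx : x = j
      · subst hx; simp
      · simp [Finsupp.single_apply, (Ne.symm hx : j ≠ x), (hsupp x hx).1]
    have hd₂ : d₂ = Finsupp.single j (d₂ j) := by
      ext x
      by_cases hx : x = j
      · subst hx; simp
      · simp [Finsupp.single_apply, (Ne.symm hx : j ≠ x), (hsupp x hx).2]
    have hsum : d₁ j + d₂ j = m + n := by
      have := congrArg (fun f => f j) hmem
      simpa using this
    have hne' : d₁ j ≠ m := by
      intro h
      apply hne
      have h2 : d₂ j = n := by omega
      rw [hd₁, hd₂, h, h2]
    rcases lt_or_gt_of_ne hne' with hlt | hgt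
    · have : q.coeff d₂ = 0 := by
        apply coeff_eq_zero_of_totalDegree_lt
        rw [hd₂]
        have hn0 : d₂ j ≠ 0 := by omega
        rw [Finsupp.support_single_ne_zero _ hn0]
        simp only [Finset.sum_singleton, Finsupp.single_eq_same]
        omega
      rw [this, mul_zero]
    · have : p.coeff d₁ = 0 := by
        apply coeff_eq_zero_of_totalDegree_lt
        rw [hd₁]
        have hn0 : d₁ j ≠ 0 := by omega
        rw [Finsupp.support_single_ne_zero _ hn0]
        simp only [Finset.sum_singleton, Finsupp.single_eq_same]
        omega
      rw [this, zero_mul]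
  · intro h
    exact absurd (Finset.HasAntidiagonal.mem_antidiagonal.mpr (Finsupp.single_add j m n).symm) h

lemma coeff_single_top_prod {ι σ F : Type*} [CommRing F] [DecidableEq σ] (j : σ)
    (s : Finset ι) (L : ι → MvPolynomial σ F) (h : ∀ i ∈ s, (L i).totalDegree ≤ 1) :
    (∏ i ∈ s, L i).coeff (Finsupp.single j s.card) =
      ∏ i ∈ s, (L i).coeff (Finsupp.single j 1) := by
  classical
  induction s using Finset.induction_on with
  | empty => simp
  | @insert a s ha ih =>
    rw [Finset.prod_insert ha, Finset.prod_insert ha, Finset.card_insert_of_notMem ha]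
    have hq : (∏ i ∈ s, L i).totalDegree ≤ s.card := by
      refine (totalDegree_finset_prod _ _).trans ?_
      calc ∑ i ∈ s, (L i).totalDegree ≤ ∑ _i ∈ s, 1 :=
        Finset.sum_le_sum (fun i hi => h i (Finset.mem_insert_of_mem hi))
      _ = s.card := by simp
    rw [show s.card + 1 = 1 + s.card from by omega,
      coeff_single_top_mul j _ _ (h a (Finset.mem_insert_self a s)) hq,
      ih (fun i hi => h i (Finset.mem_insert_of_mem hi))]

/-- For a prime power `k ≥ 3`, a permutation `π` of `F_k`, and `(a,b)` with
`π a ≠ b`, there is a polynomial of total degree `k - 2` vanishing on the graph of `π`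
and nonzero at `(a,b)`. -/
theorem stmt_1 (k : ℕ) (hk : 3 ≤ k) (hpp : IsPrimePow k)
    (F : Type) [Field F] [Fintype F] (hcard : Fintype.card F = k)
    (π : Equiv.Perm F) (a b : F) (hab : π a ≠ b) :
    ∃ f : MvPolynomial (Fin 2) F,
      f.totalDegree = k - 2 ∧ (∀ c : F, MvPolynomial.eval ![c, π c] f = 0) ∧
        MvPolynomial.eval ![a, b] f ≠ 0 := by
  classical
  -- the line through (p, π p) and (q, π q)
  set Lp : F → F → MvPolynomial (Fin 2) F := fun p q =>
    C (q - p) * X 1 - C (π q - π p) * X 0 + C ((π q - π p) * p - (q - p) * π p) with hLp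
  have heval : ∀ p q x y : F,
      MvPolynomial.eval ![x, y] (Lp p q) = (q - p) * (y - π p) - (π q - π p) * (x - p) := by
    intro p q x y
    simp only [hLp, map_add, map_sub, map_mul, eval_C, eval_X, Matrix.cons_val_one,
      Matrix.head_cons, Matrix.cons_val_zero]
    ring
  have hdeg : ∀ p q : F, (Lp p q).totalDegree ≤ 1 := by
    intro p q
    rw [hLp]
    refine (totalDegree_add _ _).trans ?_
    simp only [totalDegree_C, max_le_iff]
    refine ⟨?_, Nat.zero_le _⟩
    rw [sub_eq_add_neg]
    refine (totalDegree_add _ _).trans (max_le ?_ ?_)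
    · exact (totalDegree_mul _ _).trans (by rw [totalDegree_C, totalDegree_X])
    · rw [totalDegree_neg]
      exact (totalDegree_mul _ _).trans (by rw [totalDegree_C, totalDegree_X])
  have h01 : Finsupp.single (0 : Fin 2) 1 ≠ Finsupp.single (1 : Fin 2) 1 := by
    simp [Finsupp.single_eq_single_iff]
  have h00 : ¬((0 : Fin 2 →₀ ℕ) = Finsupp.single (1 : Fin 2) 1) := by
    rw [eq_comm]
    simp [Finsupp.single_eq_zero]
  have hcoe : ∀ p q : F, (Lp p q).coeff (Finsupp.single 1 1) = q - p := by
    intro p q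
    rw [hLp]
    dsimp only
    rw [coeff_add, coeff_sub, coeff_C_mul, coeff_C_mul, coeff_X', coeff_X', coeff_C,
      if_pos rfl, if_neg h01, if_neg h00]
    ring
  set i := π.symm b with hi
  have hπi : π i = b := π.apply_symm_apply b
  have hia : i ≠ a := fun h => hab (by rw [← h, hπi])
  set T : Finset F := Finset.univ \ {a, i} with hT
  have hTcard : T.card = k - 2 := by
    rw [hT, Finset.card_sdiff_of_subset (Finset.subset_univ _), Finset.card_univ, hcard]
    rw [Finset.card_insert_of_notMem (by simp [Ne.symm hia]), Finset.card_singleton]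
  obtain ⟨j, hjT⟩ : T.Nonempty := Finset.card_pos.mp (by omega)
  have hja : j ≠ a := by
    have := Finset.mem_sdiff.mp hjT
    simp at this; exact this.1
  have hji : j ≠ i := by
    have := Finset.mem_sdiff.mp hjT
    simp at this; exact this.2
  have hπjb : π j ≠ b := fun h => hji (by rw [hi, ← h, Equiv.symm_apply_apply])
  set g : F → MvPolynomial (Fin 2) F := fun c => if c = j then Lp i j else Lp a c with hg
  have hgdeg : ∀ c ∈ T, (g c).totalDegree ≤ 1 := by
    intro c _
    rw [hg]; dsimp only; split <;> apply hdeg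
  refine ⟨∏ c ∈ T, g c, ?_, ?_, ?_⟩
  · -- total degree
    have hcoeff : (∏ c ∈ T, g c).coeff (Finsupp.single 1 (k - 2)) ≠ 0 := by
      rw [← hTcard, coeff_single_top_prod 1 T g hgdeg, Finset.prod_ne_zero_iff]
      intro c hc
      rw [hg]; dsimp only
      split
      · rw [hcoe]
        exact sub_ne_zero.mpr hji
      · rw [hcoe]
        have : c ≠ a := by
          have := Finset.mem_sdiff.mp hc
          simp at this; exact this.1
        exact sub_ne_zero.mpr this
    refine le_antisymm ?_ ?_
    · refine (totalDegree_finset_prod _ _).trans ?_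
      calc ∑ c ∈ T, (g c).totalDegree ≤ ∑ _c ∈ T, 1 := Finset.sum_le_sum hgdeg
        _ = T.card := by simp
        _ = k - 2 := hTcard
    · have hmem : Finsupp.single (1 : Fin 2) (k - 2) ∈ (∏ c ∈ T, g c).support :=
        MvPolynomial.mem_support_iff.mpr hcoeff
      have h := MvPolynomial.le_totalDegree hmem
      rwa [Finsupp.sum_single_index rfl] at h
  · -- vanishing on the graph
    intro c
    rw [map_prod]
    by_cases hci : c = i
    · subst hci
      refine Finset.prod_eq_zero hjT ?_
      rw [hg]; dsimp only; rw [if_pos rfl, heval]; ring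
    by_cases hcj : c = j
    · subst hcj
      refine Finset.prod_eq_zero hjT ?_
      rw [hg]; dsimp only; rw [if_pos rfl, heval]; ring
    by_cases hca : c = a
    · subst hca
      by_cases h2 : ∃ d ∈ T, d ≠ j
      · obtain ⟨d, hdT, hdj⟩ := h2
        refine Finset.prod_eq_zero hdT ?_
        rw [hg]; dsimp only; rw [if_neg hdj, heval]; ring
      · -- T = {j}, so k = 3 and the three points are collinear
        push_neg at h2
        have hk3 : k = 3 := by
          have hT1 : T.card = 1 := Finset.card_eq_one.mpr ⟨j, Finset.eq_singleton_iff_unique_mem.mpr ⟨hjT, h2⟩⟩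
          omega
        have h3 : (3 : F) = 0 := by
          have := FiniteField.cast_card_eq_zero F
          rw [hcard, hk3] at this
          exact_mod_cast this
        have hSzero : ∑ x : F, x = 0 := by
          have h1 : ∑ x : F, -x = ∑ x : F, x := Equiv.sum_comp (Equiv.neg F) id
          rw [Finset.sum_neg_distrib] at h1
          linear_combination (∑ x : F, x) * h3 + h1
        have hij3 : ({c, i, j} : Finset F).card = 3 := by
          rw [Finset.card_insert_of_notMem (by simp [hci, hcj]),
            Finset.card_insert_of_notMem (by simp [hji.symm]), Finset.card_singleton]
        have huniv : ({c, i, j} : Finset F) = Finset.univ :=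
          Finset.eq_univ_of_card _ (by rw [hij3, hcard, hk3])
        have hsum1 : c + i + j = 0 := by
          have : ∑ x ∈ ({c, i, j} : Finset F), x = ∑ x : F, x := by rw [huniv]
          rw [Finset.sum_insert (by simp [hci, hcj]),
            Finset.sum_insert (by simp [hji.symm]), Finset.sum_singleton, hSzero] at this
          linear_combination this
        have hsum2 : π c + π i + π j = 0 := by
          have hperm : ∑ x : F, π x = ∑ x : F, x := Equiv.sum_comp π id
          have : ∑ x ∈ ({c, i, j} : Finset F), π x = ∑ x : F, π x := by rw [huniv]
          rw [Finset.sum_insert (by simp [hci, hcj]),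
            Finset.sum_insert (by simp [hji.symm]), Finset.sum_singleton, hperm, hSzero] at this
          linear_combination this
        refine Finset.prod_eq_zero hjT ?_
        rw [hg]; dsimp only; rw [if_pos rfl, heval]
        linear_combination (π i - π j) * hsum1 + (j - i) * hsum2 + (i * π j - j * π i) * h3
    · -- c ∈ T, c ≠ j
      have hcT : c ∈ T := by
        rw [hT, Finset.mem_sdiff]
        simp [hca, hci]
      refine Finset.prod_eq_zero hcT ?_
      rw [hg]; dsimp only; rw [if_neg hcj, heval]; ring
  · -- nonvanishing at (a, b)
    rw [map_prod, Finset.prod_ne_zero_iff]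
    intro c hc
    by_cases hcj : c = j
    · subst hcj
      rw [hg]; dsimp only; rw [if_pos rfl, heval, hπi]
      have h1 : π c - b ≠ 0 := sub_ne_zero.mpr hπjb
      have h2 : a - i ≠ 0 := sub_ne_zero.mpr (Ne.symm hia)
      intro h
      apply mul_ne_zero h1 h2
      linear_combination -h
    · rw [hg]; dsimp only; rw [if_neg hcj, heval]
      have hca : c ≠ a := by
        have := Finset.mem_sdiff.mp hc
        simp at this; exact this.1
      have h1 : c - a ≠ 0 := sub_ne_zero.mpr hca
      have h2 : b - π a ≠ 0 := sub_ne_zero.mpr (Ne.symm hab)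
      intro h
      apply mul_ne_zero h1 h2
      linear_combination h
end

section
/- Let k be an odd prime power and π a permutation of F_k. Then there exist distinct a, b₁, b₂ ∈ F_k such that (π(b₁) − π(a))/(b₁ − a) = (π(b₂) − π(a))/(b₂ − a); equivalently, the points (a, π(a)), (b₁, π(b₁)), (b₂, π(b₂)) are collinear. -/
open Finset

lemma prod_erase_zero (F : Type) [Field F] [Fintype F] [DecidableEq F] :
    ∏ x ∈ Finset.univ.erase (0:F), x = -1 := by
  have h1 : ∏ x : Fˣ, (x : F) = (((∏ x : Fˣ, x) : Fˣ) : F) :=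
    map_prod (Units.coeHom F) _ _ |>.symm
  rw [FiniteField.prod_univ_units_id_eq_neg_one] at h1
  push_cast at h1
  rw [← h1]
  apply Finset.prod_bij' (fun x hx => Units.mk0 x (Finset.mem_erase.1 hx).1)
    (fun u _ => (u : F)) <;> simp [Finset.mem_erase]

lemma prod_sub_erase (F : Type) [Field F] [Fintype F] [DecidableEq F] (a : F) :
    ∏ b ∈ Finset.univ.erase a, (b - a) = -1 := by
  rw [← prod_erase_zero F]
  apply Finset.prod_bij' (fun b _ => b - a) (fun c _ => c + a) <;>
    simp [Finset.mem_erase, sub_eq_zero]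

lemma neg_one_ne_one_of_odd (F : Type) [Field F] [Fintype F] (k : ℕ)
    (hcard : Fintype.card F = k) (hodd : Odd k) : (-1 : F) ≠ 1 := by
  intro h
  have h2 : (2 : F) = 0 := by linear_combination -h
  have hp : (ringChar F).Prime := CharP.char_is_prime F (ringChar F)
  have hdvd : ringChar F ∣ 2 := by
    rwa [← CharP.cast_eq_zero_iff F (ringChar F) 2] 
  have h2' : ringChar F = 2 := (Nat.prime_dvd_prime_iff_eq hp Nat.prime_two).1 hdvd
  have : CharP F 2 := h2' ▸ ringChar.charP F
  obtain ⟨n, hn⟩ := FiniteField.card F 2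
  rw [hcard] at hn
  have hev : Even k := by
    rw [hn.2, Nat.even_pow]
    exact ⟨even_two, n.pos.ne'⟩
  exact (Nat.not_even_iff_odd.2 hodd) hev

/-- For an odd prime power `k` and a permutation `π` of `F_k`, there are
distinct `a, b₁, b₂` with `(π b₁ - π a)/(b₁ - a) = (π b₂ - π a)/(b₂ - a)`,
i.e. the three points `(a, π a), (b₁, π b₁), (b₂, π b₂)` are collinear. -/
theorem stmt_2 (k : ℕ) (hpp : IsPrimePow k) (hodd : Odd k)
    (F : Type) [Field F] [Fintype F] (hcard : Fintype.card F = k)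
    (π : Equiv.Perm F) :
    ∃ a b₁ b₂ : F, a ≠ b₁ ∧ a ≠ b₂ ∧ b₁ ≠ b₂ ∧
      (π b₁ - π a) * (b₂ - a) = (π b₂ - π a) * (b₁ - a) := by
  classical
  by_contra hc
  push_neg at hc
  have hne : Nonempty F := Fintype.card_pos_iff.mp (by rw [hcard]; exact hpp.pos)
  obtain ⟨a⟩ := hne
  set s : F → F := fun b => (π b - π a) * (b - a)⁻¹ with hs
  -- s is injective on univ.erase a
  have hinj : ∀ x ∈ Finset.univ.erase a, ∀ y ∈ Finset.univ.erase a, s x = s y → x = y := by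
    intro x hx y hy hxy
    by_contra hxyne
    have hxa : x ≠ a := (Finset.mem_erase.1 hx).1
    have hya : y ≠ a := (Finset.mem_erase.1 hy).1
    apply hc a x y (Ne.symm hxa) (Ne.symm hya) hxyne
    have hxa' : x - a ≠ 0 := sub_ne_zero.2 hxa
    have hya' : y - a ≠ 0 := sub_ne_zero.2 hya
    simp only [hs] at hxy
    field_simp at hxy
    linear_combination hxy
  have himg : (Finset.univ.erase a).image s = Finset.univ.erase (0:F) := by
    apply Finset.eq_of_subset_of_card_le
    · intro x hx
      obtain ⟨b, hb, rfl⟩ := Finset.mem_image.1 hx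
      have hba := (Finset.mem_erase.1 hb).1
      refine Finset.mem_erase.2 ⟨?_, Finset.mem_univ _⟩
      exact mul_ne_zero (sub_ne_zero.2 (π.injective.ne hba))
        (inv_ne_zero (sub_ne_zero.2 hba))
    · rw [Finset.card_image_of_injOn (fun x hx y hy => hinj x hx y hy)]
      simp
  have hprod1 : ∏ b ∈ Finset.univ.erase a, s b = -1 := by
    rw [← prod_erase_zero F, ← himg, Finset.prod_image hinj]
  have hprod2 : ∏ b ∈ Finset.univ.erase a, s b = 1 := by
    rw [hs]
    simp only []
    rw [Finset.prod_mul_distrib, Finset.prod_inv_distrib]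
    have h1 : ∏ b ∈ Finset.univ.erase a, (π b - π a) = -1 := by
      rw [← prod_sub_erase F (π a)]
      apply Finset.prod_bij' (fun b _ => π b) (fun c _ => π.symm c) <;>
        simp only [Finset.mem_erase, Finset.mem_univ, and_true, ne_eq,
          Equiv.apply_symm_apply, Equiv.symm_apply_apply, implies_true] <;>
        intro x hx <;>
        simp_all [Equiv.symm_apply_eq, π.injective.ne_iff]
    rw [h1, prod_sub_erase]
    norm_num
  exact neg_one_ne_one_of_odd F k hcard hodd (hprod1 ▸ hprod2)
end

section
/- Let F be a field, let A₁, …, Aₙ be non-empty finite subsets of F, and let B = A₁ × ⋯ × Aₙ. Suppose P ∈ F[x₁,…,xₙ] has total degree d and does not vanish on all of B. Let S = |A₁| + ⋯ + |Aₙ| and t = max |Aᵢ|. If S ≥ n + d and t ≥ 2, then the number of points of B at which P is nonzero is at least t^{(S−n−d)/(t−1)}. -/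
open MvPolynomial

open Real in
lemma rpow_aux {t q : ℝ} (ht : 2 ≤ t) (hq1 : 1 ≤ q) (hqt : q ≤ t) :
    t ^ ((q - 1) / (t - 1)) ≤ q := by
  have ht1 : (1:ℝ) < t := by linarith
  have htpos : (0:ℝ) < t := by linarith
  have hq0 : (0:ℝ) < q := by linarith
  have ht1' : t - 1 ≠ 0 := by linarith
  set θ : ℝ := (q - 1) / (t - 1) with hθ
  have hθ0 : 0 ≤ θ := div_nonneg (by linarith) (by linarith)
  have hθ1 : θ ≤ 1 := by
    rw [hθ, div_le_one (by linarith)]; linarith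
  have hcomb : θ • t + (1 - θ) • (1:ℝ) = q := by
    simp only [smul_eq_mul, mul_one, hθ]
    field_simp
    ring
  have hlog := strictConcaveOn_log_Ioi.concaveOn.2 (Set.mem_Ioi.2 htpos)
    (Set.mem_Ioi.2 one_pos) hθ0 (show (0:ℝ) ≤ 1 - θ by linarith) (by ring)
  rw [hcomb] at hlog
  simp only [smul_eq_mul, Real.log_one, mul_zero, add_zero] at hlog
  calc t ^ θ = Real.exp (θ * Real.log t) := by
        rw [Real.rpow_def_of_pos htpos]; ring_nf
    _ ≤ Real.exp (Real.log q) := Real.exp_le_exp.2 hlog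
    _ = q := Real.exp_log hq0

section AF
variable {F : Type} [Field F]


open MvPolynomial

variable {F : Type} [Field F] {n : ℕ}

lemma degreeOf_sum_le'' {σ ι : Type*} {R : Type*} [CommSemiring R] (j : σ) (s : Finset ι)
    (f : ι → MvPolynomial σ R) (d : ℕ) (h : ∀ i ∈ s, degreeOf j (f i) ≤ d) :
    degreeOf j (∑ i ∈ s, f i) ≤ d := by
  classical
  induction s using Finset.induction_on with
  | empty => simp
  | @insert a s' hx ih =>
    rw [Finset.sum_insert hx]
    refine (degreeOf_add_le _ _ _).trans ?_
    exact max_le (h a (Finset.mem_insert_self _ _))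
      (ih fun i hi => h i (Finset.mem_insert_of_mem hi))

lemma degreeOf_zero_rename_succ (q : MvPolynomial (Fin n) F) :
    degreeOf (0 : Fin (n+1)) (rename Fin.succ q) = 0 := by
  rw [degreeOf_def, degrees_rename_of_injective (Fin.succ_injective n)]
  refine Multiset.count_eq_zero_of_notMem ?_
  intro h
  obtain ⟨x, _, hx⟩ := Multiset.mem_map.mp h
  exact Fin.succ_ne_zero x hx

lemma degreeOf_X_pow_le (i j : Fin (n+1)) (e : ℕ) :
    degreeOf i ((X j : MvPolynomial (Fin (n+1)) F) ^ e) ≤ if i = j then e else 0 := by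
  rw [X_pow_eq_monomial, degreeOf_monomial_eq _ _ (one_ne_zero)]
  rcases eq_or_ne i j with h | h
  · simp [Finsupp.single_apply, h]
  · simp only [Finsupp.single_apply]
    rw [if_neg (fun hh => h hh.symm), if_neg h]

lemma symm_C (q : MvPolynomial (Fin n) F) :
    (finSuccEquiv F n).symm (Polynomial.C q) = rename Fin.succ q := by
  have : ((finSuccEquiv F n).symm.toAlgHom.toRingHom.comp
      (Polynomial.C : MvPolynomial (Fin n) F →+* Polynomial (MvPolynomial (Fin n) F)))
      = (rename (Fin.succ : Fin n → Fin (n+1))).toRingHom := by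
    apply MvPolynomial.ringHom_ext
    · intro a
      simp only [RingHom.coe_comp, Function.comp_apply, AlgHom.toRingHom_eq_coe,
        RingHom.coe_coe, AlgEquiv.toAlgHom_eq_coe, rename_C]
      rw [← MvPolynomial.finSuccEquiv_comp_C_eq_C n]
      simp
    · intro j
      simp only [RingHom.coe_comp, Function.comp_apply, AlgHom.toRingHom_eq_coe,
        RingHom.coe_coe, AlgEquiv.toAlgHom_eq_coe, rename_X]
      rw [← finSuccEquiv_X_succ (j := j)]
      simp
  exact RingHom.congr_fun this q

lemma symm_X : ((finSuccEquiv F n).symm Polynomial.X : MvPolynomial (Fin (n+1)) F) = X 0 := by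
  rw [← finSuccEquiv_X_zero (n := n)]; simp

lemma division (A₀ : Finset F) (h₀ : A₀.Nonempty) :
    ∀ (N : ℕ) (f : Polynomial (MvPolynomial (Fin n) F)), f.natDegree ≤ N →
    ∃ r : Polynomial (MvPolynomial (Fin n) F),
      r.natDegree < A₀.card ∧
      totalDegree ((finSuccEquiv F n).symm r) ≤ totalDegree ((finSuccEquiv F n).symm f) ∧
      ∀ c ∈ A₀, ∀ y : Fin n → F,
        Polynomial.eval c (r.map (eval y)) = Polynomial.eval c (f.map (eval y)) := by
  have hk : 1 ≤ A₀.card := Finset.card_pos.mpr h₀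
  set g : Polynomial (MvPolynomial (Fin n) F) :=
    ∏ a ∈ A₀, (Polynomial.X - Polynomial.C (MvPolynomial.C a)) with hg_def
  have hg_monic : g.Monic :=
    Polynomial.monic_prod_of_monic _ _ fun a _ => Polynomial.monic_X_sub_C _
  have hg_deg : g.natDegree = A₀.card := by
    rw [hg_def, Polynomial.natDegree_prod _ _
      (fun a _ => Polynomial.X_sub_C_ne_zero _)]
    simp
  have hg_eval : ∀ c ∈ A₀, ∀ y : Fin n → F,
      Polynomial.eval c (g.map (eval y)) = 0 := by
    intro c hc y
    rw [hg_def, Polynomial.map_prod, Polynomial.eval_prod]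
    apply Finset.prod_eq_zero hc
    simp
  have hg_symm_td : totalDegree ((finSuccEquiv F n).symm g) ≤ A₀.card := by
    rw [hg_def, map_prod]
    refine (totalDegree_finset_prod _ _).trans ?_
    have : ∀ a ∈ A₀, totalDegree ((finSuccEquiv F n).symm
        (Polynomial.X - Polynomial.C (MvPolynomial.C a))) ≤ 1 := by
      intro a _
      rw [map_sub, symm_X, symm_C, rename_C]
      exact (totalDegree_sub _ _).trans (by simp [totalDegree_X])
    calc ∑ a ∈ A₀, totalDegree ((finSuccEquiv F n).symm
          (Polynomial.X - Polynomial.C (MvPolynomial.C a)))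
        ≤ ∑ _a ∈ A₀, 1 := Finset.sum_le_sum this
      _ = A₀.card := by simp
  intro N
  induction N with
  | zero =>
    intro f hf
    exact ⟨f, by omega, le_rfl, fun _ _ _ => rfl⟩
  | succ N ih =>
    intro f hf
    by_cases hdeg : f.natDegree < A₀.card
    · exact ⟨f, hdeg, le_rfl, fun _ _ _ => rfl⟩
    push_neg at hdeg
    set m := f.natDegree with hm
    set k := A₀.card with hk_def
    have hf0 : f ≠ 0 := by
      intro h
      rw [h, Polynomial.natDegree_zero] at hm
      omega
    set L := f.coeff m with hL_def
    have hL : L ≠ 0 := by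
      rw [hL_def, hm]
      exact Polynomial.leadingCoeff_ne_zero.mpr hf0
    set T : Polynomial (MvPolynomial (Fin n) F) :=
      Polynomial.C L * (Polynomial.X ^ (m - k) * g) with hT_def
    have hTcoeff : T.coeff m = L := by
      rw [hT_def, Polynomial.coeff_C_mul]
      have h2 : (Polynomial.X ^ (m - k) * g).coeff m = g.coeff k := by
        have := Polynomial.coeff_X_pow_mul g (m - k) k
        rwa [show k + (m - k) = m by omega] at this
      rw [h2, show k = g.natDegree from by omega, hg_monic.coeff_natDegree, mul_one]
    have hTdeg : T.natDegree ≤ m := by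
      refine (Polynomial.natDegree_mul_le).trans ?_
      have : (Polynomial.X ^ (m - k) * g).natDegree ≤ (m - k) + k := by
        refine (Polynomial.natDegree_mul_le).trans ?_
        simp [Polynomial.natDegree_X_pow, hg_deg]
      simp only [Polynomial.natDegree_C, zero_add]
      omega
    have hTeval : ∀ c ∈ A₀, ∀ y : Fin n → F,
        Polynomial.eval c (T.map (eval y)) = 0 := by
      intro c hc y
      rw [hT_def]
      simp only [Polynomial.map_mul, Polynomial.eval_mul]
      rw [hg_eval c hc y]
      ring
    have hTtd : totalDegree ((finSuccEquiv F n).symm T) ≤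
        totalDegree ((finSuccEquiv F n).symm f) := by
      have hLtd : totalDegree L + m ≤ totalDegree ((finSuccEquiv F n).symm f) := by
        have := totalDegree_coeff_finSuccEquiv_add_le ((finSuccEquiv F n).symm f) m
          (by rw [AlgEquiv.apply_symm_apply]; exact hL)
        rwa [AlgEquiv.apply_symm_apply] at this
      rw [hT_def, map_mul, map_mul, map_pow, symm_C, symm_X]
      refine (totalDegree_mul _ _).trans ?_
      have h1 : (rename Fin.succ L).totalDegree ≤ L.totalDegree := totalDegree_rename_le _ _
      have h2 : ((X (0 : Fin (n+1)) : MvPolynomial (Fin (n+1)) F) ^ (m - k) *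
          (finSuccEquiv F n).symm g).totalDegree ≤ (m - k) + k := by
        refine (totalDegree_mul _ _).trans ?_
        have := totalDegree_X_pow (R := F) (0 : Fin (n+1)) (m - k)
        omega
      omega
    set f' := f - T with hf'_def
    have hf'coeff : f'.coeff m = 0 := by
      rw [hf'_def, Polynomial.coeff_sub, hTcoeff, ← hL_def, sub_self]
    have hf'deg : f'.natDegree ≤ m := (Polynomial.natDegree_sub_le _ _).trans (by omega)
    by_cases hf'0 : f' = 0
    · refine ⟨0, by simp; omega, by simp, ?_⟩
      intro c hc y
      have hfT : f = T := by
        have := sub_eq_zero.mp (hf'_def ▸ hf'0)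
        exact this
      rw [hfT, hTeval c hc y]
      simp
    · have hf'lt : f'.natDegree < m := by
        rcases lt_or_eq_of_le hf'deg with h | h
        · exact h
        · exfalso
          apply hf'0
          have := Polynomial.leadingCoeff_ne_zero.mpr hf'0
          rw [Polynomial.leadingCoeff, h] at this
          exact absurd hf'coeff this
      obtain ⟨r, hr1, hr2, hr3⟩ := ih f' (by omega)
      refine ⟨r, hr1, ?_, ?_⟩
      · refine hr2.trans ?_
        rw [hf'_def, map_sub]
        exact (totalDegree_sub _ _).trans (by omega)
      · intro c hc y
        rw [hr3 c hc y, hf'_def]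
        simp only [Polynomial.map_sub, Polynomial.eval_sub]
        rw [hTeval c hc y, sub_zero]

lemma reduce : ∀ (n : ℕ) (A : Fin n → Finset F), (∀ i, (A i).Nonempty) →
    ∀ P : MvPolynomial (Fin n) F, ∃ Q : MvPolynomial (Fin n) F,
      Q.totalDegree ≤ P.totalDegree ∧ (∀ i, Q.degreeOf i < (A i).card) ∧
      ∀ x : Fin n → F, (∀ i, x i ∈ A i) → eval x Q = eval x P := by
  intro n
  induction n with
  | zero =>
    intro A hA P
    exact ⟨P, le_rfl, fun i => i.elim0, fun _ _ => rfl⟩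
  | succ n ih =>
    intro A hA P
    set f := finSuccEquiv F n P with hf_def
    obtain ⟨r, hr1, hr2, hr3⟩ := division (A 0) (hA 0) f.natDegree f le_rfl
    rw [hf_def, AlgEquiv.symm_apply_apply] at hr2
    have IH := fun (i : ℕ) => ih (fun j => A j.succ) (fun j => hA j.succ) (r.coeff i)
    choose q hq1 hq2 hq3 using IH
    classical
    set q' : ℕ → MvPolynomial (Fin n) F := fun i => if r.coeff i = 0 then 0 else q i with hq'_def
    have hq'td : ∀ i, (q' i).totalDegree ≤ (r.coeff i).totalDegree := by
      intro i; by_cases h : r.coeff i = 0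
      · simp [hq'_def, if_pos h]
      · simpa [hq'_def, if_neg h] using hq1 i
    have hq'deg : ∀ i j, (q' i).degreeOf j < (A j.succ).card := by
      intro i j; by_cases h : r.coeff i = 0
      · simpa [hq'_def, if_pos h] using Finset.card_pos.mpr (hA j.succ)
      · simpa [hq'_def, if_neg h] using hq2 i j
    have hq'eval : ∀ i (y : Fin n → F), (∀ j, y j ∈ A j.succ) →
        eval y (q' i) = eval y (r.coeff i) := by
      intro i y hy; by_cases h : r.coeff i = 0
      · simp [hq'_def, if_pos h, h]
      · simpa [hq'_def, if_neg h] using hq3 i y hy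
    set Q : MvPolynomial (Fin (n+1)) F :=
      ∑ i ∈ Finset.range (A 0).card, rename Fin.succ (q' i) * X 0 ^ i with hQ_def
    refine ⟨Q, ?_, ?_, ?_⟩
    · -- total degree
      rw [hQ_def]
      refine (totalDegree_finset_sum _ _).trans (Finset.sup_le ?_)
      intro i _
      by_cases h : r.coeff i = 0
      · simp [hq'_def, h]
      · refine (totalDegree_mul _ _).trans ?_
        have h1 : (rename (Fin.succ) (q' i)).totalDegree ≤ (r.coeff i).totalDegree :=
          (totalDegree_rename_le _ _).trans (hq'td i)
        have h2 : ((X (0:Fin (n+1)) : MvPolynomial (Fin (n+1)) F) ^ i).totalDegree = i :=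
          totalDegree_X_pow _ _
        have h3 : (r.coeff i).totalDegree + i ≤
            ((finSuccEquiv F n).symm r).totalDegree := by
          have := totalDegree_coeff_finSuccEquiv_add_le ((finSuccEquiv F n).symm r) i
            (by rw [AlgEquiv.apply_symm_apply]; exact h)
          rwa [AlgEquiv.apply_symm_apply] at this
        omega
    · -- degreeOf
      intro idx
      refine Fin.cases ?_ ?_ idx
      · -- idx = 0
        have hcard : 1 ≤ (A 0).card := Finset.card_pos.mpr (hA 0)
        rw [hQ_def]
        have : degreeOf (0 : Fin (n+1)) (∑ i ∈ Finset.range (A 0).card,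
            rename Fin.succ (q' i) * X 0 ^ i) ≤ (A 0).card - 1 := by
          refine degreeOf_sum_le'' _ _ _ _ ?_
          intro i hi
          refine (degreeOf_mul_le _ _ _).trans ?_
          have h1 := degreeOf_zero_rename_succ (q' i)
          have h2 := degreeOf_X_pow_le (F := F) (0 : Fin (n+1)) 0 i
          rw [if_pos rfl] at h2
          have : i ≤ (A 0).card - 1 := by
            have := Finset.mem_range.mp hi; omega
          omega
        omega
      · -- idx = j.succ
        intro j
        rw [hQ_def]
        have hcard : 1 ≤ (A j.succ).card := Finset.card_pos.mpr (hA j.succ)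
        have : degreeOf (Fin.succ j) (∑ i ∈ Finset.range (A 0).card,
            rename Fin.succ (q' i) * X 0 ^ i) ≤ (A j.succ).card - 1 := by
          refine degreeOf_sum_le'' _ _ _ _ ?_
          intro i _
          refine (degreeOf_mul_le _ _ _).trans ?_
          have h1 : degreeOf (Fin.succ j) (rename Fin.succ (q' i)) = degreeOf j (q' i) :=
            degreeOf_rename_of_injective (Fin.succ_injective n) j
          have h2 := degreeOf_X_pow_le (F := F) (Fin.succ j) 0 i
          rw [if_neg (Fin.succ_ne_zero j)] at h2
          have := hq'deg i j
          omega
        omega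
    · -- eval
      intro x hx
      have htail : ∀ j, (x ∘ Fin.succ) j ∈ A j.succ := fun j => hx j.succ
      have e1 : eval x Q = ∑ i ∈ Finset.range (A 0).card,
          eval (x ∘ Fin.succ) (r.coeff i) * (x 0) ^ i := by
        rw [hQ_def, map_sum]
        refine Finset.sum_congr rfl ?_
        intro i _
        rw [map_mul, map_pow, eval_rename, eval_X, hq'eval i _ htail]
      have e2 : Polynomial.eval (x 0) (r.map (eval (x ∘ Fin.succ))) =
          ∑ i ∈ Finset.range (A 0).card,
            eval (x ∘ Fin.succ) (r.coeff i) * (x 0) ^ i := by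
        rw [Polynomial.eval_eq_sum_range' (lt_of_le_of_lt Polynomial.natDegree_map_le hr1)]
        refine Finset.sum_congr rfl ?_
        intro i _
        rw [Polynomial.coeff_map]
      have e3 : eval x P = Polynomial.eval (x 0) (f.map (eval (x ∘ Fin.succ))) := by
        have h := eval_eq_eval_mv_eval' (x ∘ Fin.succ) (x 0) P
        rw [← hf_def] at h
        have hx' : (Fin.cons (x 0) (x ∘ Fin.succ) : Fin (n+1) → F) = x :=
          Fin.cons_self_tail x
        rw [← hx']
        exact h
      rw [e1, ← e2, hr3 (x 0) (hx 0) (x ∘ Fin.succ), ← e3]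

end AF

section Main
variable {F : Type} [Field F] [DecidableEq F]

lemma main_bound (t : ℝ) (ht2 : 2 ≤ t) :
    ∀ (n : ℕ) (A : Fin n → Finset F), (∀ i, (A i).Nonempty) →
    (∀ i, ((A i).card : ℝ) ≤ t) →
    ∀ P : MvPolynomial (Fin n) F, P ≠ 0 → (∀ i, P.degreeOf i < (A i).card) →
    t ^ (((∑ i, ((A i).card : ℝ)) - n - P.totalDegree) / (t - 1)) ≤
      (((Fintype.piFinset A).filter fun x => eval x P ≠ 0).card : ℝ) := by
  have ht0 : (0:ℝ) < t := by linarith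
  have ht1 : (1:ℝ) ≤ t := by linarith
  intro n
  induction n with
  | zero =>
    intro A hA htle P hP0 hdeg
    obtain ⟨c, rfl⟩ := C_surjective (Fin 0) P
    have hc : c ≠ 0 := fun h => hP0 (by rw [h, map_zero])
    have h1 : ((Fintype.piFinset A).filter fun x => eval x (C c : MvPolynomial (Fin 0) F) ≠ 0)
        = Fintype.piFinset A := by
      refine Finset.filter_true_of_mem ?_
      intro x _
      simpa using hc
    rw [h1]
    have h2 : (Fintype.piFinset A).card = 1 := by
      rw [Fintype.card_piFinset]
      simp
    rw [h2]
    simp only [Finset.univ_eq_empty, Finset.sum_empty, Nat.cast_zero, totalDegree_C,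
      CharP.cast_eq_zero, Nat.cast_one]
    norm_num
  | succ n ih =>
    intro A hA htle P hP0 hdeg
    set f := finSuccEquiv F n P with hf_def
    have hf0 : f ≠ 0 := by
      rw [hf_def]
      exact (EmbeddingLike.map_ne_zero_iff).mpr hP0
    set e := f.natDegree with he_def
    set L := f.leadingCoeff with hL_def
    have hL0 : L ≠ 0 := Polynomial.leadingCoeff_ne_zero.mpr hf0
    have he : e < (A 0).card := by
      rw [he_def, hf_def, natDegree_finSuccEquiv]
      exact hdeg 0
    have hLe : L = (finSuccEquiv F n P).coeff e := rfl
    have hLdeg : ∀ j : Fin n, L.degreeOf j < (A j.succ).card := by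
      intro j
      refine lt_of_le_of_lt ?_ (hdeg j.succ)
      rw [hLe]
      exact degreeOf_coeff_finSuccEquiv P j e
    have hLtd : L.totalDegree + e ≤ P.totalDegree := by
      rw [hLe]
      exact totalDegree_coeff_finSuccEquiv_add_le P e (by rw [← hLe]; exact hL0)
    have IH := ih (fun j => A j.succ) (fun j => hA j.succ) (fun j => htle j.succ) L hL0 hLdeg
    set A' : Fin n → Finset F := fun j => A j.succ with hA'_def
    set good := (Fintype.piFinset A').filter fun y => eval y L ≠ 0 with hgood_def
    set q : ℕ := (A 0).card - e with hq_def
    have hq1 : 1 ≤ q := by omega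
    -- per-fiber bound
    have fiber : ∀ y ∈ good, q ≤ ((A 0).filter fun c =>
        Polynomial.eval c (f.map (eval y)) ≠ 0).card := by
      intro y hy
      have hyL : eval y L ≠ 0 := (Finset.mem_filter.mp hy).2
      set fy := f.map (eval y) with hfy_def
      have hfy0 : fy ≠ 0 := by
        intro h
        apply hyL
        have : fy.coeff e = 0 := by rw [h]; simp
        rw [hfy_def, Polynomial.coeff_map] at this
        rw [hLe]
        exact this
      have hfydeg : fy.natDegree ≤ e := by
        rw [hfy_def, he_def]
        exact Polynomial.natDegree_map_le
      have hzero : ((A 0).filter fun c => Polynomial.eval c fy = 0).card ≤ e := by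
        have hsub : ((A 0).filter fun c => Polynomial.eval c fy = 0) ⊆ fy.roots.toFinset := by
          intro c hc
          rw [Multiset.mem_toFinset, Polynomial.mem_roots hfy0]
          exact (Finset.mem_filter.mp hc).2
        calc ((A 0).filter fun c => Polynomial.eval c fy = 0).card
            ≤ fy.roots.toFinset.card := Finset.card_le_card hsub
          _ ≤ Multiset.card fy.roots := Multiset.toFinset_card_le _
          _ ≤ fy.natDegree := Polynomial.card_roots' fy
          _ ≤ e := hfydeg
      have := Finset.card_filter_add_card_filter_not
        (s := A 0) (fun c => Polynomial.eval c fy ≠ 0)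
      have h2 : ((A 0).filter fun c => ¬ Polynomial.eval c fy ≠ 0) =
          ((A 0).filter fun c => Polynomial.eval c fy = 0) := by
        apply Finset.filter_congr
        intro c _
        simp
      rw [h2] at this
      omega
    -- counting
    set T := (Fintype.piFinset A).filter fun x => eval x P ≠ 0 with hT_def
    have hfibeq : ∀ y ∈ good, (T.filter fun x => x ∘ Fin.succ = y).card =
        ((A 0).filter fun c => Polynomial.eval c (f.map (eval y)) ≠ 0).card := by
      intro y hy
      have hyA : y ∈ Fintype.piFinset A' := Finset.mem_filter.mp hy |>.1
      refine Finset.card_nbij' (fun x => x 0) (fun c => Fin.cons c y) ?_ ?_ ?_ ?_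
      · intro x hx
        obtain ⟨hxT, hxtail⟩ := Finset.mem_filter.mp hx
        obtain ⟨hxB, hxP⟩ := Finset.mem_filter.mp hxT
        refine Finset.mem_filter.mpr ⟨Fintype.mem_piFinset.mp hxB 0, ?_⟩
        have hev : eval x P = Polynomial.eval (x 0) (f.map (eval (x ∘ Fin.succ))) := by
          have h := eval_eq_eval_mv_eval' (x ∘ Fin.succ) (x 0) P
          rw [← hf_def] at h
          have hx' : (Fin.cons (x 0) (x ∘ Fin.succ) : Fin (n+1) → F) = x :=
            Fin.cons_self_tail x
          rw [← hx']
          exact h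
        rw [← hxtail]
        rw [hev] at hxP
        exact hxP
      · intro c hc
        obtain ⟨hcA, hcP⟩ := Finset.mem_filter.mp hc
        refine Finset.mem_filter.mpr ⟨Finset.mem_filter.mpr ⟨?_, ?_⟩, ?_⟩
        · refine Fintype.mem_piFinset.mpr ?_
          intro i
          refine Fin.cases ?_ ?_ i
          · simpa using hcA
          · intro j
            simpa using Fintype.mem_piFinset.mp hyA j
        · have hev : eval (Fin.cons c y : Fin (n+1) → F) P =
              Polynomial.eval c (f.map (eval y)) := by
            have h := eval_eq_eval_mv_eval' y c P
            rw [← hf_def] at h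
            exact h
          rw [hev]
          exact hcP
        · funext j
          simp [Fin.cons_succ]
      · intro x hx
        obtain ⟨_, hxtail⟩ := Finset.mem_filter.mp hx
        rw [← hxtail]
        exact Fin.cons_self_tail x
      · intro c _
        simp
    have hcount : good.card * q ≤ T.card := by
      have h1 : T.card = ∑ y ∈ Fintype.piFinset A',
          (T.filter fun x => x ∘ Fin.succ = y).card := by
        refine Finset.card_eq_sum_card_fiberwise ?_
        intro x hx
        obtain ⟨hxB, _⟩ := Finset.mem_filter.mp hx
        refine Fintype.mem_piFinset.mpr fun j => ?_
        exact Fintype.mem_piFinset.mp hxB j.succ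
      rw [h1]
      calc good.card * q = ∑ _y ∈ good, q := by rw [Finset.sum_const, smul_eq_mul]
        _ ≤ ∑ y ∈ good, (T.filter fun x => x ∘ Fin.succ = y).card := by
            refine Finset.sum_le_sum ?_
            intro y hy
            rw [hfibeq y hy]
            exact fiber y hy
        _ ≤ ∑ y ∈ Fintype.piFinset A', (T.filter fun x => x ∘ Fin.succ = y).card := by
            refine Finset.sum_le_sum_of_subset (Finset.filter_subset _ _)
    -- real arithmetic
    have hqcard : q ≤ (A 0).card := by omega
    have hqt : (q : ℝ) ≤ t := le_trans (Nat.cast_le.mpr hqcard) (htle 0)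
    have key := rpow_aux ht2 (by exact_mod_cast hq1) hqt
    have hsum : (∑ i : Fin (n+1), ((A i).card : ℝ)) =
        ((A 0).card : ℝ) + ∑ j : Fin n, ((A' j).card : ℝ) := by
      rw [Fin.sum_univ_succ]
    have hcast : (q:ℝ) = ((A 0).card : ℝ) - e := by
      rw [hq_def]
      push_cast [Nat.cast_sub (le_of_lt he)]
      ring
    have hd : (L.totalDegree : ℝ) + e ≤ (P.totalDegree : ℝ) := by exact_mod_cast hLtd
    have hnum : (∑ i : Fin (n+1), ((A i).card : ℝ)) - (((n:ℝ))+1) - P.totalDegree ≤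
        ((q:ℝ) - 1) + ((∑ j : Fin n, ((A' j).card : ℝ)) - n - L.totalDegree) := by
      rw [hsum, hcast]
      linarith
    have hexp : ((∑ i : Fin (n+1), ((A i).card : ℝ)) - ((n:ℝ)+1) - P.totalDegree) / (t-1) ≤
        ((q:ℝ) - 1) / (t-1) + ((∑ j : Fin n, ((A' j).card : ℝ)) - n - L.totalDegree) / (t-1) := by
      rw [← add_div]
      gcongr
    have final : t ^ (((∑ i : Fin (n+1), ((A i).card : ℝ)) - ((n:ℝ)+1) - (P.totalDegree:ℝ)) / (t-1))
        ≤ (T.card : ℝ) :=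
      calc t ^ (((∑ i : Fin (n+1), ((A i).card : ℝ)) - ((n:ℝ)+1) - (P.totalDegree:ℝ)) / (t-1))
          ≤ t ^ (((q:ℝ) - 1) / (t-1) + ((∑ j : Fin n, ((A' j).card : ℝ)) - n - L.totalDegree) / (t-1)) :=
            Real.rpow_le_rpow_of_exponent_le ht1 hexp
        _ = t ^ (((q:ℝ) - 1) / (t-1)) * t ^ (((∑ j : Fin n, ((A' j).card : ℝ)) - n - L.totalDegree) / (t-1)) :=
            Real.rpow_add ht0 _ _
        _ ≤ (q : ℝ) * (good.card : ℝ) := by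
            refine mul_le_mul key IH (Real.rpow_nonneg (le_of_lt ht0) _) ?_
            positivity
        _ ≤ (T.card : ℝ) := by
            rw [mul_comm]
            exact_mod_cast Nat.cast_le.mpr hcount
    rw [show ((n+1 : ℕ):ℝ) = (n:ℝ)+1 from by push_cast; ring]
    exact final


/-- Bosek–Grytczuk–Gutowski–Serra–Zajac corollary of Alon–Füredi:
if `P` has total degree `d`, does not vanish on all of the box `B = ∏ Aᵢ`,
`S = ∑ |Aᵢ| ≥ n + d` and `t = max |Aᵢ| ≥ 2`, then `P` is nonzero at
at least `t^((S - n - d)/(t - 1))` points of `B`. -/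
theorem stmt_6 (F : Type) [Field F] [DecidableEq F] (n : ℕ)
    (A : Fin n → Finset F) (hA : ∀ i, (A i).Nonempty)
    (P : MvPolynomial (Fin n) F)
    (hP : ∃ x ∈ Fintype.piFinset A, MvPolynomial.eval x P ≠ 0)
    (hS : n + P.totalDegree ≤ ∑ i, (A i).card)
    (ht : 2 ≤ Finset.univ.sup fun i => (A i).card) :
    ((Finset.univ.sup fun i => (A i).card : ℕ) : ℝ) ^
        (((∑ i, ((A i).card : ℝ)) - n - P.totalDegree) /
          (((Finset.univ.sup fun i => (A i).card : ℕ) : ℝ) - 1)) ≤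
      (((Fintype.piFinset A).filter fun x => MvPolynomial.eval x P ≠ 0).card : ℝ) := by
  obtain ⟨x₀, hx₀B, hx₀⟩ := hP
  obtain ⟨Q, hQtd, hQdeg, hQeval⟩ := reduce n A hA P
  set t : ℝ := ((Finset.univ.sup fun i => (A i).card : ℕ) : ℝ) with ht_def
  have ht2 : (2:ℝ) ≤ t := by rw [ht_def]; exact_mod_cast ht
  have ht1 : (1:ℝ) ≤ t := by linarith
  have htle : ∀ i, ((A i).card : ℝ) ≤ t := by
    intro i
    rw [ht_def]
    exact_mod_cast Finset.le_sup (f := fun i => (A i).card) (Finset.mem_univ i)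
  have hQ0 : Q ≠ 0 := by
    intro h
    apply hx₀
    rw [← hQeval x₀ (fun i => Fintype.mem_piFinset.mp hx₀B i), h, map_zero]
  have hmb := main_bound t ht2 n A hA htle Q hQ0 hQdeg
  have hfilter : ((Fintype.piFinset A).filter fun x => eval x Q ≠ 0) =
      ((Fintype.piFinset A).filter fun x => eval x P ≠ 0) := by
    apply Finset.filter_congr
    intro x hx
    rw [hQeval x (fun i => Fintype.mem_piFinset.mp hx i)]
  rw [hfilter] at hmb
  refine le_trans ?_ hmb
  apply Real.rpow_le_rpow_of_exponent_le ht1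
  have : (Q.totalDegree : ℝ) ≤ (P.totalDegree : ℝ) := by exact_mod_cast hQtd
  have htpos : (0:ℝ) < t - 1 := by linarith
  gcongr <;> linarith

end Main
end

section
/- Let G be a simple graph on n vertices with m edges, and let k ≥ 2 be an integer with χ_ℓ(G) ≤ k. If m ≤ (k−1)n, then the list color function satisfies P_ℓ(G, k) ≥ k^{n − m/(k−1)}. -/
open Finset

namespace Stmt7

noncomputable def F (k : ℕ) (x : ℝ) : ℝ := (k:ℝ) ^ (max x 0 / ((k:ℝ) - 1))

variable {k : ℕ}

lemma kpos (hk : 2 ≤ k) : (1:ℝ) < (k:ℝ) := by exact_mod_cast hk.trans_lt' one_lt_two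

lemma F_nonneg (hk : 2 ≤ k) (x : ℝ) : 0 ≤ F k x :=
  Real.rpow_nonneg (by positivity) _

lemma F_pos (hk : 2 ≤ k) (x : ℝ) : 0 < F k x :=
  Real.rpow_pos_of_pos (by have := kpos hk; linarith) _

lemma F_mono (hk : 2 ≤ k) {x y : ℝ} (h : x ≤ y) : F k x ≤ F k y := by
  have h1 : (1:ℝ) ≤ k := (kpos hk).le
  apply Real.rpow_le_rpow_of_exponent_le h1
  have : (0:ℝ) < (k:ℝ) - 1 := by have := kpos hk; linarith
  have hden : (0:ℝ) < (k:ℝ) - 1 := by have := kpos hk; linarith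
  gcongr

lemma F_nonpos (hk : 2 ≤ k) {x : ℝ} (h : x ≤ 0) : F k x = 1 := by
  rw [F, max_eq_right h, zero_div, Real.rpow_zero]

lemma F_shift (hk : 2 ≤ k) {x δ : ℝ} (hδ : 0 ≤ δ) :
    F k (x + δ) ≤ F k x * (k:ℝ) ^ (δ / ((k:ℝ) - 1)) := by
  have hkpos : (0:ℝ) < k := by have := kpos hk; linarith
  have hk1 : (0:ℝ) < (k:ℝ) - 1 := by have := kpos hk; linarith
  rw [F, F, ← Real.rpow_add hkpos, ← add_div]
  apply Real.rpow_le_rpow_of_exponent_le (kpos hk).le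
  apply div_le_div_of_nonneg_right ?_ hk1.le
  rcases le_total x 0 with h | h
  · rw [max_eq_right h, zero_add]
    rw [max_le_iff]
    exact ⟨by linarith, hδ⟩
  · rw [max_eq_left h, max_eq_left (by linarith)]

/-- convexity: `k^((y-1)/(k-1)) ≤ y` for `1 ≤ y ≤ k`. -/
lemma rpow_fact (hk : 2 ≤ k) {y : ℕ} (h1 : 1 ≤ y) (h2 : y ≤ k) :
    (k:ℝ) ^ (((y:ℝ) - 1) / ((k:ℝ) - 1)) ≤ (y:ℝ) := by
  have hk1 : (1:ℝ) < k := kpos hk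
  have hy1 : (1:ℝ) ≤ (y:ℝ) := by exact_mod_cast h1
  have hyk : (y:ℝ) ≤ (k:ℝ) := by exact_mod_cast h2
  set t : ℝ := ((y:ℝ) - 1) / ((k:ℝ) - 1) with ht
  have hk1' : (0:ℝ) < (k:ℝ) - 1 := by linarith
  have ht0 : 0 ≤ t := div_nonneg (by linarith) (by linarith)
  have ht1 : t ≤ 1 := (div_le_one hk1').2 (by linarith)
  have := Real.geom_mean_le_arith_mean2_weighted ht0 (by linarith : (0:ℝ) ≤ 1 - t)
      (by linarith : (0:ℝ) ≤ (k:ℝ)) zero_le_one (by ring)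
  have h1pow : (1:ℝ) ^ (1 - t) = 1 := Real.one_rpow _
  rw [h1pow, mul_one, mul_one] at this
  have : (k:ℝ) ^ t ≤ t * k + (1 - t) := this
  have htk : t * ((k:ℝ) - 1) = (y:ℝ) - 1 := by
    rw [ht, div_mul_cancel₀]; exact ne_of_gt hk1'
  nlinarith [htk]



variable {n : ℕ}

lemma reduce_aux (T : ℕ) (s : Finset ℝ) (hs : s.Nonempty) (N : ℕ) :
    ∀ q : Polynomial (MvPolynomial (Fin n) ℝ), q.natDegree ≤ N →
    (∀ i, q.coeff i ≠ 0 → (q.coeff i).totalDegree + i ≤ T) →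
    ∃ r : Polynomial (MvPolynomial (Fin n) ℝ),
      (∀ i, r.coeff i ≠ 0 → (r.coeff i).totalDegree + i ≤ T) ∧
      r.degree < (s.card : ℕ) ∧
      ∀ (x : Fin n → ℝ), ∀ a ∈ s,
        (r.map (MvPolynomial.eval x)).eval a = (q.map (MvPolynomial.eval x)).eval a := by
  induction N with
  | zero =>
    intro q hq hinv
    refine ⟨q, hinv, ?_, fun _ _ _ => rfl⟩
    calc q.degree ≤ (q.natDegree : ℕ) := Polynomial.degree_le_natDegree
    _ < (s.card : ℕ) := by
        rw [Nat.le_zero] at hq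
        rw [hq]
        exact_mod_cast hs.card_pos
  | succ N ih =>
    intro q hq hinv
    by_cases hlt : q.degree < (s.card : ℕ)
    · exact ⟨q, hinv, hlt, fun _ _ _ => rfl⟩
    push_neg at hlt
    have hq0 : q ≠ 0 := by
      rintro rfl
      rw [Polynomial.degree_zero] at hlt
      exact absurd hlt (by simp)
    set d := q.natDegree with hd
    have hdegq : q.degree = (d : ℕ) := Polynomial.degree_eq_natDegree hq0
    have hsd : s.card ≤ d := by
      rw [hdegq] at hlt
      exact_mod_cast hlt
    have hscard : 0 < s.card := hs.card_pos
    set g0 : Polynomial ℝ := ∏ a ∈ s, (Polynomial.X - Polynomial.C a) with hg0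
    have hg0monic : g0.Monic := Polynomial.monic_prod_of_monic _ _
      (fun a _ => Polynomial.monic_X_sub_C a)
    have hg0deg : g0.natDegree = s.card := by
      rw [hg0, Polynomial.natDegree_prod _ _ (fun a _ => Polynomial.X_sub_C_ne_zero a)]
      simp [Polynomial.natDegree_X_sub_C]
    set G : Polynomial (MvPolynomial (Fin n) ℝ) :=
      g0.map (MvPolynomial.C : ℝ →+* MvPolynomial (Fin n) ℝ) with hG
    have hGmonic : G.Monic := hg0monic.map _
    have hGdeg : G.natDegree = s.card := by
      rw [hG, Polynomial.natDegree_map_eq_of_injective (MvPolynomial.C_injective _ _), hg0deg]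
    set lead := q.leadingCoeff with hlead
    have hlead0 : lead ≠ 0 := Polynomial.leadingCoeff_ne_zero.2 hq0
    set e := d - s.card with he
    set t : Polynomial (MvPolynomial (Fin n) ℝ) := Polynomial.C lead * (Polynomial.X ^ e * G)
      with hT
    have htmonic : (Polynomial.X ^ e * G : Polynomial (MvPolynomial (Fin n) ℝ)).Monic :=
      (Polynomial.monic_X_pow e).mul hGmonic
    have htdeg : t.degree = q.degree := by
      rw [hT, Polynomial.degree_C_mul (by exact hlead0), Polynomial.degree_mul,
        Polynomial.degree_X_pow, Polynomial.degree_eq_natDegree hGmonic.ne_zero, hGdeg, hdegq]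
      exact_mod_cast congrArg (Nat.cast : ℕ → WithBot ℕ) (by omega : e + s.card = d)
    have hlc : t.leadingCoeff = lead := by
      rw [hT, Polynomial.leadingCoeff_mul, Polynomial.leadingCoeff_C, htmonic.leadingCoeff,
        mul_one]
    set q' := q - t with hq'
    have hq'deg : q'.degree < q.degree :=
      Polynomial.degree_sub_lt htdeg.symm hq0 hlc.symm
    have hq'nat : q'.natDegree ≤ N := by
      rcases eq_or_ne q' 0 with h | h
      · simp [h]
      · have := Polynomial.natDegree_lt_natDegree h hq'deg
        omega
    have hdT : lead.totalDegree + d ≤ T := hinv d hlead0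
    have ht_coeff : ∀ i, ∃ c : ℝ, t.coeff i = MvPolynomial.C c * lead := by
      intro i
      rw [hT, Polynomial.coeff_C_mul, mul_comm (Polynomial.X ^ e) G,
        Polynomial.coeff_mul_X_pow']
      rcases le_or_gt e i with h | h
      · refine ⟨g0.coeff (i - e), ?_⟩
        rw [if_pos h, hG, Polynomial.coeff_map]
        ring
      · refine ⟨0, ?_⟩
        rw [if_neg h.not_ge]
        simp
    have hinv' : ∀ i, q'.coeff i ≠ 0 → (q'.coeff i).totalDegree + i ≤ T := by
      intro i hi
      have hid : i < d := by
        by_contra hcon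
        push_neg at hcon
        exact hi (Polynomial.coeff_eq_zero_of_degree_lt
          (hq'deg.trans_le (hdegq.trans_le (by exact_mod_cast hcon))))
      obtain ⟨c, hc⟩ := ht_coeff i
      have hq'c : q'.coeff i = q.coeff i - MvPolynomial.C c * lead := by
        rw [hq', Polynomial.coeff_sub, hc]
      have hb : (MvPolynomial.C c * lead).totalDegree ≤ lead.totalDegree :=
        le_trans (MvPolynomial.totalDegree_mul _ _) (by simp)
      have h1 : (q.coeff i).totalDegree + i ≤ T := by
        by_cases hz : q.coeff i = 0
        · rw [hz, MvPolynomial.totalDegree_zero]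
          omega
        · exact hinv i hz
      have h2 : (MvPolynomial.C c * lead).totalDegree + i ≤ T := by omega
      calc (q'.coeff i).totalDegree + i
          ≤ max (q.coeff i).totalDegree (MvPolynomial.C c * lead).totalDegree + i := by
            rw [hq'c]
            exact Nat.add_le_add_right (MvPolynomial.totalDegree_sub _ _) i
      _ ≤ T := by omega
    have heval : ∀ (x : Fin n → ℝ), ∀ a ∈ s,
        (q'.map (MvPolynomial.eval x)).eval a = (q.map (MvPolynomial.eval x)).eval a := by
      intro x a ha
      have hg0a : Polynomial.eval a g0 = 0 := by
        rw [hg0, Polynomial.eval_prod]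
        exact Finset.prod_eq_zero ha (by simp)
      have hGmap : G.map (MvPolynomial.eval x) = g0 := by
        rw [hG, Polynomial.map_map]
        have hcomp : (MvPolynomial.eval x).comp
            (MvPolynomial.C : ℝ →+* MvPolynomial (Fin n) ℝ) = RingHom.id ℝ :=
          RingHom.ext fun r => MvPolynomial.eval_C _
        rw [hcomp, Polynomial.map_id]
      rw [hq', Polynomial.map_sub, Polynomial.eval_sub, hT, Polynomial.map_mul,
        Polynomial.map_mul, Polynomial.map_pow, Polynomial.map_X, hGmap, Polynomial.eval_mul,
        Polynomial.eval_mul, hg0a, mul_zero, mul_zero, sub_zero]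
    obtain ⟨r, h1, h2, h3⟩ := ih q' hq'nat hinv'
    exact ⟨r, h1, h2, fun x a ha => (h3 x a ha).trans (heval x a ha)⟩


open scoped Classical in
lemma ncard_filter_eq {α : Type*} (s : Finset α) (p : α → Prop) :
    {x | x ∈ s ∧ p x}.ncard = (s.filter p).card := by
  rw [← Set.ncard_coe_finset]
  congr 1
  ext x
  simp

open scoped Classical in
lemma AF (k : ℕ) (hk : 2 ≤ k) :
    ∀ (n : ℕ) (S : Fin n → Finset ℝ) (P : MvPolynomial (Fin n) ℝ),
    (∀ i, (S i).Nonempty) → (∀ i, (S i).card ≤ k) →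
    (∃ x ∈ Fintype.piFinset S, MvPolynomial.eval x P ≠ 0) →
    F k ((∑ i, ((S i).card : ℝ)) - n - P.totalDegree) ≤
      (({x | x ∈ Fintype.piFinset S ∧ MvPolynomial.eval x P ≠ 0}).ncard : ℝ) := by
  intro n
  induction n with
  | zero =>
    intro S P hne hcard hex
    obtain ⟨x, hx, hPx⟩ := hex
    have harg : (∑ i : Fin 0, ((S i).card : ℝ)) - (0:ℕ) - P.totalDegree ≤ 0 := by
      simp
    rw [F_nonpos hk harg, ncard_filter_eq, Finset.filter_congr_decidable]
    have hmem : x ∈ (Fintype.piFinset S).filter (fun x => MvPolynomial.eval x P ≠ 0) :=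
      Finset.mem_filter.2 ⟨hx, hPx⟩
    have : 0 < ((Fintype.piFinset S).filter (fun x => MvPolynomial.eval x P ≠ 0)).card :=
      Finset.card_pos.2 ⟨x, hmem⟩
    exact_mod_cast this
  | succ n ih =>
    intro S P hne hcard hex
    rw [ncard_filter_eq, Finset.filter_congr_decidable]
    set T := P.totalDegree with hTdef
    set q := MvPolynomial.finSuccEquiv ℝ n P with hqdef
    have hinvq : ∀ i, q.coeff i ≠ 0 → (q.coeff i).totalDegree + i ≤ T :=
      fun i hi => MvPolynomial.totalDegree_coeff_finSuccEquiv_add_le P i hi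
    obtain ⟨r, hrinv, hrdeg, hragree⟩ := reduce_aux T (S 0) (hne 0) q.natDegree q le_rfl hinvq
    set S' : Fin n → Finset ℝ := fun i => S i.succ with hS'
    set grid' := Fintype.piFinset S' with hgrid'
    have hev : ∀ (a : ℝ) (x : Fin n → ℝ), a ∈ S 0 →
        MvPolynomial.eval (Fin.cons a x) P = (r.map (MvPolynomial.eval x)).eval a := by
      intro a x ha
      rw [MvPolynomial.eval_eq_eval_mv_eval', ← hragree x a ha]
    obtain ⟨x₀, hx₀, hPx₀⟩ := hex
    have hx0' : Fin.tail x₀ ∈ grid' :=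
      Fintype.mem_piFinset.2 fun i => (Fintype.mem_piFinset.1 hx₀) i.succ
    have hx00 : x₀ 0 ∈ S 0 := (Fintype.mem_piFinset.1 hx₀) 0
    have hPx₀' : (r.map (MvPolynomial.eval (Fin.tail x₀))).eval (x₀ 0) ≠ 0 := by
      rw [← hev _ _ hx00, Fin.cons_self_tail]
      exact hPx₀
    set J := (Finset.range (S 0).card).filter
      (fun i => ∃ x' ∈ grid', MvPolynomial.eval x' (r.coeff i) ≠ 0) with hJ
    have hJne : J.Nonempty := by
      have hmapne : r.map (MvPolynomial.eval (Fin.tail x₀)) ≠ 0 := by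
        intro h
        rw [h] at hPx₀'
        simp at hPx₀'
      obtain ⟨i, hi⟩ : ∃ i, MvPolynomial.eval (Fin.tail x₀) (r.coeff i) ≠ 0 := by
        by_contra h
        push_neg at h
        apply hmapne
        ext i
        simp [Polynomial.coeff_map, h i]
      have hri : r.coeff i ≠ 0 := by
        intro hz
        rw [hz] at hi
        simp at hi
      have hilt : i < (S 0).card := by
        by_contra hge
        push_neg at hge
        exact hri (Polynomial.coeff_eq_zero_of_degree_lt
          (hrdeg.trans_le (by exact_mod_cast hge)))
      exact ⟨i, Finset.mem_filter.2 ⟨Finset.mem_range.2 hilt, ⟨_, hx0', hi⟩⟩⟩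
    set j := J.max' hJne with hj
    have hjmem := J.max'_mem hJne
    have hjlt : j < (S 0).card := Finset.mem_range.1 (Finset.mem_filter.1 hjmem).1
    obtain ⟨x₁, hx₁g, hx₁⟩ := (Finset.mem_filter.1 hjmem).2
    set c := r.coeff j with hc
    have hx₁c : MvPolynomial.eval x₁ c ≠ 0 := hx₁
    have hc0 : c ≠ 0 := fun h => hx₁c (by rw [h]; simp)
    have hcdeg : c.totalDegree + j ≤ T := hrinv j hc0
    have hhigh : ∀ i, j < i → ∀ x' ∈ grid', MvPolynomial.eval x' (r.coeff i) = 0 := by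
      intro i hji x' hx'
      by_contra h
      have hi0 : r.coeff i ≠ 0 := by
        intro hh
        rw [hh] at h
        simp at h
      have hilt : i < (S 0).card := by
        by_contra hge
        push_neg at hge
        exact hi0 (Polynomial.coeff_eq_zero_of_degree_lt
          (hrdeg.trans_le (by exact_mod_cast hge)))
      have : i ∈ J := Finset.mem_filter.2 ⟨Finset.mem_range.2 hilt, ⟨x', hx', h⟩⟩
      exact absurd (J.le_max' i this) (not_le.2 hji)
    set good := grid'.filter (fun x' => MvPolynomial.eval x' c ≠ 0) with hgood
    -- per-point bound
    have hper : ∀ x' ∈ good, (S 0).card - j ≤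
        ((S 0).filter (fun a => MvPolynomial.eval (Fin.cons a x') P ≠ 0)).card := by
      intro x' hx'
      obtain ⟨hx'g, hx'c⟩ := Finset.mem_filter.1 hx'
      set u := r.map (MvPolynomial.eval x') with hu
      have hu0 : u ≠ 0 := by
        intro h
        apply hx'c
        have : u.coeff j = 0 := by rw [h]; simp
        rwa [hu, Polynomial.coeff_map] at this
      have hudeg : u.natDegree ≤ j := by
        apply Polynomial.natDegree_le_iff_coeff_eq_zero.2
        intro i hji
        rw [hu, Polynomial.coeff_map]
        exact hhigh i hji x' hx'g
      have hZ : ((S 0).filter (fun a => u.eval a = 0)).card ≤ j := by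
        calc ((S 0).filter (fun a => u.eval a = 0)).card
            ≤ u.roots.toFinset.card := by
              apply Finset.card_le_card
              intro a ha
              obtain ⟨-, ha2⟩ := Finset.mem_filter.1 ha
              exact Multiset.mem_toFinset.2 ((Polynomial.mem_roots hu0).2 ha2)
        _ ≤ Multiset.card u.roots := u.roots.toFinset_card_le
        _ ≤ u.natDegree := Polynomial.card_roots' u
        _ ≤ j := hudeg
      have hsplit := Finset.card_filter_add_card_filter_not
        (s := S 0) (p := fun a => u.eval a = 0)
      have heq : (S 0).filter (fun a => MvPolynomial.eval (Fin.cons a x') P ≠ 0) =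
          (S 0).filter (fun a => ¬ u.eval a = 0) := by
        apply Finset.filter_congr
        intro a ha
        rw [hev a x' ha]
      rw [heq]
      omega
    -- biUnion
    set B : Finset (Fin (n+1) → ℝ) := good.biUnion (fun x' =>
      ((S 0).filter (fun a => MvPolynomial.eval (Fin.cons a x') P ≠ 0)).image
        (fun a => (Fin.cons a x' : Fin (n+1) → ℝ))) with hB
    have hBsub : B ⊆ (Fintype.piFinset S).filter (fun x => MvPolynomial.eval x P ≠ 0) := by
      intro y hy
      obtain ⟨x', hx'g, hy2⟩ := Finset.mem_biUnion.1 hy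
      obtain ⟨a, ha, rfl⟩ := Finset.mem_image.1 hy2
      obtain ⟨ha1, ha2⟩ := Finset.mem_filter.1 ha
      refine Finset.mem_filter.2 ⟨?_, ha2⟩
      apply Fintype.mem_piFinset.2
      intro i
      refine Fin.cases ?_ ?_ i
      · simpa using ha1
      · intro i'
        simpa using (Fintype.mem_piFinset.1 (Finset.mem_filter.1 hx'g).1) i'
    have hdisj : (good : Set (Fin n → ℝ)).PairwiseDisjoint (fun x' =>
        (((S 0).filter (fun a => MvPolynomial.eval (Fin.cons a x') P ≠ 0)).image
          (fun a => (Fin.cons a x' : Fin (n+1) → ℝ)) : Finset (Fin (n+1) → ℝ))) := by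
      intro x' _ x'' _ hne'
      apply Finset.disjoint_left.2
      intro y hy1 hy2
      obtain ⟨a, -, rfl⟩ := Finset.mem_image.1 hy1
      obtain ⟨b, -, hab⟩ := Finset.mem_image.1 hy2
      apply hne'
      have h2 := congrArg Fin.tail hab
      rw [Fin.tail_cons, Fin.tail_cons] at h2
      exact h2.symm
    have hBcard : good.card * ((S 0).card - j) ≤ B.card := by
      rw [hB, Finset.card_biUnion hdisj]
      calc good.card * ((S 0).card - j) = ∑ _x' ∈ good, ((S 0).card - j) := by
            rw [Finset.sum_const, smul_eq_mul]
      _ ≤ ∑ x' ∈ good, (((S 0).filter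
            (fun a => MvPolynomial.eval (Fin.cons a x') P ≠ 0)).image
              (fun a => (Fin.cons a x' : Fin (n+1) → ℝ))).card := by
          apply Finset.sum_le_sum
          intro x' hx'
          rw [Finset.card_image_of_injective _ (fun a b h => by
            have := congrFun h 0
            simpa using this)]
          exact hper x' hx'
    -- IH
    have hIH := ih S' c (fun i => hne _) (fun i => hcard _) ⟨x₁, hx₁g, hx₁⟩
    rw [ncard_filter_eq, Finset.filter_congr_decidable] at hIH
    -- real arithmetic
    set s₀ := (S 0).card with hs₀
    have hj1 : j + 1 ≤ s₀ := hjlt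
    have hs₀k : s₀ ≤ k := hcard 0
    have hyk : s₀ - j ≤ k := by omega
    have hy1 : 1 ≤ s₀ - j := by omega
    have hsum : (∑ i : Fin (n+1), ((S i).card : ℝ)) =
        (s₀ : ℝ) + ∑ i : Fin n, ((S' i).card : ℝ) := by
      rw [Fin.sum_univ_succ]
    set A := ∑ i : Fin n, ((S' i).card : ℝ) with hA
    have hδ : (0:ℝ) ≤ (s₀ : ℝ) - 1 - j := by
      have : ((j:ℝ) + 1) ≤ (s₀:ℝ) := by exact_mod_cast hj1
      linarith
    have harg : (∑ i : Fin (n+1), ((S i).card : ℝ)) - (n+1 : ℕ) - T =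
        ((A - n + j - T)) + ((s₀:ℝ) - 1 - j) := by
      rw [hsum]
      push_cast
      ring
    have hchain1 : F k ((∑ i : Fin (n+1), ((S i).card : ℝ)) - (n+1 : ℕ) - T) ≤
        F k (A - n + j - T) * ((s₀ - j : ℕ) : ℝ) := by
      rw [harg]
      calc F k ((A - n + j - T) + ((s₀:ℝ) - 1 - j))
          ≤ F k (A - n + j - T) * (k:ℝ) ^ (((s₀:ℝ) - 1 - j) / ((k:ℝ) - 1)) :=
            F_shift hk hδ
      _ ≤ F k (A - n + j - T) * ((s₀ - j : ℕ) : ℝ) := by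
          apply mul_le_mul_of_nonneg_left ?_ (F_nonneg hk _)
          have hcast : (((s₀ - j : ℕ) : ℝ) - 1) = (s₀:ℝ) - 1 - j := by
            push_cast [Nat.cast_sub (by omega : j ≤ s₀)]
            ring
          rw [← hcast]
          exact rpow_fact hk hy1 hyk
    have hchain2 : F k (A - n + j - T) ≤ (good.card : ℝ) := by
      refine le_trans (F_mono hk ?_) hIH
      have : (c.totalDegree : ℝ) + j ≤ T := by exact_mod_cast hcdeg
      linarith
    calc F k ((∑ i : Fin (n+1), ((S i).card : ℝ)) - ((n+1 : ℕ) : ℝ) - T)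
        ≤ F k (A - n + j - T) * ((s₀ - j : ℕ) : ℝ) := hchain1
    _ ≤ (good.card : ℝ) * ((s₀ - j : ℕ) : ℝ) := by
        apply mul_le_mul_of_nonneg_right hchain2 (by positivity)
    _ = ((good.card * (s₀ - j) : ℕ) : ℝ) := by push_cast; ring
    _ ≤ (B.card : ℝ) := by exact_mod_cast hBcard
    _ ≤ _ := by exact_mod_cast Finset.card_le_card hBsub


end Stmt7

open Stmt7 in
/-- If `χ_ℓ(G) ≤ k` (every `k`-assignment of real-number lists admits a
proper coloring) and `m ≤ (k-1)n`, then every `k`-assignment has at least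
`k^(n - m/(k-1))` proper list colorings, i.e. `P_ℓ(G,k) ≥ k^(n - m/(k-1))`. -/
theorem stmt_7 {V : Type} [Fintype V] [DecidableEq V] (G : SimpleGraph V)
    [DecidableRel G.Adj]
    (n m k : ℕ) (hn : Fintype.card V = n) (hm : G.edgeFinset.card = m)
    (hk : 2 ≤ k)
    (hch : ∀ L : V → Finset ℝ, (∀ v, (L v).card = k) →
      ∃ f : V → ℝ, (∀ v, f v ∈ L v) ∧ ∀ u v, G.Adj u v → f u ≠ f v)
    (hmn : (m : ℝ) ≤ ((k : ℝ) - 1) * n) :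
    ∀ L : V → Finset ℝ, (∀ v, (L v).card = k) →
      (k : ℝ) ^ ((n : ℝ) - (m : ℝ) / ((k : ℝ) - 1)) ≤
        (Nat.card {f : V → ℝ // (∀ v, f v ∈ L v) ∧
          ∀ u v, G.Adj u v → f u ≠ f v} : ℝ) := by
  intro L hL
  classical
  have hk1 : (1:ℝ) < (k:ℝ) := by exact_mod_cast hk.trans_lt' one_lt_two
  set σ : V ≃ Fin n := Fintype.equivFinOfCardEq hn with hσ
  set P : MvPolynomial (Fin n) ℝ := ∏ e ∈ G.edgeFinset,
    (MvPolynomial.X (σ e.out.1) - MvPolynomial.X (σ e.out.2)) with hP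
  have hPdeg : P.totalDegree ≤ m := by
    calc P.totalDegree ≤ ∑ e ∈ G.edgeFinset,
        (MvPolynomial.X (σ e.out.1) - MvPolynomial.X (σ e.out.2) :
          MvPolynomial (Fin n) ℝ).totalDegree :=
      MvPolynomial.totalDegree_finset_prod _ _
    _ ≤ ∑ _e ∈ G.edgeFinset, 1 := Finset.sum_le_sum fun e _ =>
        le_trans (MvPolynomial.totalDegree_sub _ _)
          (by simp [MvPolynomial.totalDegree_X])
    _ = m := by rw [Finset.sum_const, smul_eq_mul, mul_one, hm]
  have hkey : ∀ f : V → ℝ,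
      (MvPolynomial.eval (fun i => f (σ.symm i)) P ≠ 0 ↔
        ∀ u v, G.Adj u v → f u ≠ f v) := by
    intro f
    have hevP : MvPolynomial.eval (fun i => f (σ.symm i)) P =
        ∏ e ∈ G.edgeFinset, (f e.out.1 - f e.out.2) := by
      rw [hP, map_prod]
      exact Finset.prod_congr rfl fun e _ => by simp
    rw [hevP, Finset.prod_ne_zero_iff]
    constructor
    · intro h u v huv
      have he : s(u, v) ∈ G.edgeFinset := SimpleGraph.mem_edgeFinset.2 huv
      have h2 := sub_ne_zero.1 (h _ he)
      have hout : Quot.mk (Sym2.Rel V) (s(u, v)).out = s(u, v) := Quot.out_eq _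
      have := (Sym2.rel_iff' (α := V)).1 (Quotient.exact (s := Sym2.Rel.setoid V) hout)
      rcases this with heq | heq
      · rw [heq] at h2
        exact h2
      · rw [heq] at h2
        exact h2.symm
    · intro h e he
      apply sub_ne_zero.2
      have hadj : G.Adj e.out.1 e.out.2 := by
        have hQ : Quot.mk (Sym2.Rel V) e.out = e := Quot.out_eq e
        have hmem : Quot.mk (Sym2.Rel V) e.out ∈ G.edgeSet := by
          rw [hQ]
          exact SimpleGraph.mem_edgeFinset.1 he
        exact hmem
      exact h _ _ hadj
  set S : Fin n → Finset ℝ := fun i => L (σ.symm i) with hS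
  have hScard : ∀ i, (S i).card = k := fun i => hL _
  have hSne : ∀ i, (S i).Nonempty := fun i =>
    Finset.card_pos.1 (by rw [hScard i]; omega)
  have hex : ∃ x ∈ Fintype.piFinset S, MvPolynomial.eval x P ≠ 0 := by
    obtain ⟨f, hf1, hf2⟩ := hch L hL
    exact ⟨fun i => f (σ.symm i), Fintype.mem_piFinset.2 fun i => hf1 _,
      (hkey f).2 hf2⟩
  have hAF := AF k hk n S P hSne (fun i => (hScard i).le) hex
  set Φ : Set (Fin n → ℝ) := {x | x ∈ Fintype.piFinset S ∧ MvPolynomial.eval x P ≠ 0}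
    with hΦ
  -- equiv between the subtype and Φ
  have hmemΦ : ∀ x : Fin n → ℝ, x ∈ Φ ↔ (∀ i, x i ∈ S i) ∧
      MvPolynomial.eval x P ≠ 0 := by
    intro x
    rw [hΦ]
    simp [Fintype.mem_piFinset]
  set E : {f : V → ℝ // (∀ v, f v ∈ L v) ∧ ∀ u v, G.Adj u v → f u ≠ f v} ≃
      {x // x ∈ Φ} :=
    { toFun := fun f => ⟨fun i => f.1 (σ.symm i), by
        refine (hmemΦ _).2 ⟨fun i => f.2.1 _, (hkey f.1).2 f.2.2⟩⟩
      invFun := fun x => ⟨fun v => x.1 (σ v), by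
        obtain ⟨h1, h2⟩ := (hmemΦ _).1 x.2
        constructor
        · intro v
          have := h1 (σ v)
          simpa [hS] using this
        · have hx : (fun i => x.1 (σ (σ.symm i))) = x.1 :=
            funext fun i => by rw [Equiv.apply_symm_apply]
          have := (hkey (fun v => x.1 (σ v)))
          rw [hx] at this
          exact this.1 h2⟩
      left_inv := fun f => Subtype.ext (funext fun v => by simp)
      right_inv := fun x => Subtype.ext (funext fun i => by simp) }
  have hcardeq : Nat.card {f : V → ℝ // (∀ v, f v ∈ L v) ∧
      ∀ u v, G.Adj u v → f u ≠ f v} = Φ.ncard := by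
    rw [Nat.card_congr E, Nat.card_coe_set_eq]
  rw [hcardeq]
  -- final arithmetic
  have hsumS : (∑ i : Fin n, ((S i).card : ℝ)) = (n : ℝ) * k := by
    rw [Finset.sum_congr rfl fun i _ => by rw [hScard i]]
    simp [mul_comm]
  have hle1 : (n:ℝ) * k - n - m ≤ (∑ i, ((S i).card : ℝ)) - n - P.totalDegree := by
    rw [hsumS]
    have : (P.totalDegree : ℝ) ≤ m := by exact_mod_cast hPdeg
    linarith
  have hargnn : (0:ℝ) ≤ (n:ℝ) * k - n - m := by nlinarith
  have hFeq : F k ((n:ℝ) * k - n - m) = (k:ℝ) ^ ((n:ℝ) - (m:ℝ) / ((k:ℝ) - 1)) := by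
    rw [F, max_eq_left hargnn]
    congr 1
    have hk0 : (k:ℝ) - 1 ≠ 0 := by linarith
    field_simp
  calc (k:ℝ) ^ ((n:ℝ) - (m:ℝ) / ((k:ℝ) - 1)) = F k ((n:ℝ) * k - n - m) := hFeq.symm
  _ ≤ F k ((∑ i, ((S i).card : ℝ)) - n - P.totalDegree) := F_mono hk hle1
  _ ≤ (Φ.ncard : ℝ) := hAF
end

section
/- Let k > 2 be a prime power and G a connected simple graph on n vertices with m edges. If χ_DP(G) ≤ k and m ≤ 2n − (k−3)/(k−2), then P_DP(G, k) ≥ k^{((2n−m)(k−2) − (k−3))/(k−1)}. -/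
open MvPolynomial

/-- exponent reduction mod (k-1), keeping positivity -/
def redExp (k e : ℕ) : ℕ := if e = 0 then 0 else (e - 1) % (k - 1) + 1

lemma redExp_zero (k : ℕ) : redExp k 0 = 0 := rfl

lemma redExp_le (k e : ℕ) : redExp k e ≤ e := by
  unfold redExp
  split
  · omega
  · have h1 : (e - 1) % (k - 1) ≤ e - 1 := Nat.mod_le _ _
    omega

lemma redExp_le' {k : ℕ} (hk : 2 ≤ k) (e : ℕ) : redExp k e ≤ k - 1 := by
  unfold redExp
  split
  · omega
  · have h1 : (e - 1) % (k - 1) < k - 1 := Nat.mod_lt _ (by omega)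
    omega

lemma dvd_sub_redExp (k e : ℕ) : (k - 1) ∣ e - redExp k e := by
  unfold redExp
  split
  · simp [*]
  · have h1 : (k - 1) ∣ (e - 1) - (e - 1) % (k - 1) := Nat.dvd_sub_mod _
    have h2 : e - ((e - 1) % (k - 1) + 1) = (e - 1) - (e - 1) % (k - 1) := by omega
    rw [h2]; exact h1

lemma pow_redExp {F : Type*} [Field F] [Fintype F] (a : F) (e : ℕ) :
    a ^ redExp (Fintype.card F) e = a ^ e := by
  rcases eq_or_ne e 0 with rfl | he
  · rfl
  have hred : 0 < redExp (Fintype.card F) e := by unfold redExp; simp [he]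
  rcases eq_or_ne a 0 with rfl | ha
  · rw [zero_pow (by omega), zero_pow he]
  · obtain ⟨c, hc⟩ := dvd_sub_redExp (Fintype.card F) e
    have hle : redExp (Fintype.card F) e ≤ e := redExp_le _ _
    have : e = redExp (Fintype.card F) e + (Fintype.card F - 1) * c := by omega
    conv_rhs => rw [this]
    rw [pow_add, pow_mul, FiniteField.pow_card_sub_one_eq_one a ha, one_pow, mul_one]

section Reduce

variable {F : Type*} [Field F] [Fintype F] {σ : Type*}

/-- reduce all exponents of a multivariate polynomial mod (|F|-1), preserving eval -/
noncomputable def reducePoly (f : MvPolynomial σ F) : MvPolynomial σ F :=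
  f.support.sum fun m => monomial (Finsupp.mapRange (redExp (Fintype.card F)) (redExp_zero _) m) (f.coeff m)

lemma eval_reducePoly (f : MvPolynomial σ F) (x : σ → F) :
    eval x (reducePoly f) = eval x f := by
  rw [reducePoly, map_sum]
  rw [eval_eq x f]
  apply Finset.sum_congr rfl
  intro m hm
  rw [eval_monomial]
  congr 1
  rw [Finsupp.prod_mapRange_index (fun i => pow_zero (x i))]
  rw [Finsupp.prod]
  apply Finset.prod_congr rfl
  intro i _
  exact pow_redExp (x i) (m i)

lemma totalDegree_reducePoly_le (f : MvPolynomial σ F) :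
    (reducePoly f).totalDegree ≤ f.totalDegree := by
  refine le_trans (totalDegree_finset_sum _ _) ?_
  rw [Finset.sup_le_iff]
  intro m hm
  refine le_trans (totalDegree_monomial_le _ _) ?_
  refine le_trans ?_ (le_totalDegree hm)
  rw [Finsupp.sum_mapRange_index (fun _ => rfl)]
  exact Finsupp.sum_le_sum fun i _ => redExp_le _ _

lemma degreeOf_reducePoly_le [DecidableEq σ] (f : MvPolynomial σ F) (i : σ) :
    (reducePoly f).degreeOf i ≤ Fintype.card F - 1 := by
  rw [degreeOf_le_iff]
  intro m hm
  have := MvPolynomial.support_sum hm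
  rw [Finset.mem_biUnion] at this
  obtain ⟨m', _, hm'⟩ := this
  have hsub := MvPolynomial.support_monomial_subset hm'
  rw [Finset.mem_singleton] at hsub
  subst hsub
  rw [Finsupp.mapRange_apply]
  exact redExp_le' Fintype.one_lt_card _
open MvPolynomial Finset

variable {F : Type*} [Field F] [Fintype F] [DecidableEq F]

lemma card_nonroots (g : Polynomial F) (hg : g ≠ 0) :
    Fintype.card F - g.natDegree ≤ (univ.filter fun t : F => Polynomial.eval t g ≠ 0).card := by
  classical
  have hsub : (univ.filter fun t : F => Polynomial.eval t g = 0) ⊆ g.roots.toFinset := by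
    intro t ht
    simp only [mem_filter] at ht
    rw [Multiset.mem_toFinset, Polynomial.mem_roots hg]
    exact ht.2
  have h1 : (univ.filter fun t : F => Polynomial.eval t g = 0).card ≤ g.natDegree := by
    refine le_trans (Finset.card_le_card hsub) ?_
    refine le_trans (Multiset.toFinset_card_le _) ?_
    exact_mod_cast (Polynomial.card_roots' g)
  have h2 := Finset.card_filter_add_card_filter_not (s := (univ : Finset F))
    (p := fun t => Polynomial.eval t g = 0)
  simp only [Finset.card_univ] at h2
  simp only [ne_eq]
  omega

lemma af_lemma : ∀ (n : ℕ) (f : MvPolynomial (Fin n) F), f ≠ 0 →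
    (∀ i, f.degreeOf i ≤ Fintype.card F - 1) →
    ∀ D : ℕ, f.totalDegree ≤ D →
    (Fintype.card F : ℝ) ^ ((n : ℝ) - D / ((Fintype.card F : ℝ) - 1)) ≤
      ((univ.filter fun x : Fin n → F => eval x f ≠ 0).card : ℝ) := by
  have hk2 : 2 ≤ Fintype.card F := Fintype.one_lt_card
  have hkR : (1 : ℝ) ≤ (Fintype.card F : ℝ) := by exact_mod_cast Nat.one_le_of_lt hk2
  have hkR2 : (2 : ℝ) ≤ (Fintype.card F : ℝ) := by exact_mod_cast hk2
  have hne : (Fintype.card F : ℝ) - 1 ≠ 0 := by linarith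
  intro n
  induction n with
  | zero =>
    intro f hf _ D _
    have hc : coeff 0 f ≠ 0 := by
      intro h
      exact hf (by rw [eq_C_of_isEmpty f, h, map_zero])
    have hmem : (fun _ : Fin 0 => (0:F)) ∈ (univ.filter fun x : Fin 0 → F => eval x f ≠ 0) := by
      simp only [mem_filter, mem_univ, true_and]
      rw [eq_C_of_isEmpty f]
      simpa using hc
    have h1 : 1 ≤ (univ.filter fun x : Fin 0 → F => eval x f ≠ 0).card :=
      Finset.card_pos.mpr ⟨_, hmem⟩
    have h1' : (1:ℝ) ≤ ((univ.filter fun x : Fin 0 → F => eval x f ≠ 0).card : ℝ) := by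
      exact_mod_cast h1
    refine le_trans ?_ h1'
    apply Real.rpow_le_one_of_one_le_of_nonpos hkR
    have : (0:ℝ) ≤ (D : ℝ) / ((Fintype.card F : ℝ) - 1) := div_nonneg (by positivity) (by linarith)
    push_cast; linarith
  | succ n IH =>
    intro f hf hred D hD
    set k := Fintype.card F with hkdef
    set f' := finSuccEquiv F n f with hf'def
    have hf' : f' ≠ 0 := by
      simp only [hf'def, ne_eq, EmbeddingLike.map_eq_zero_iff]
      exact hf
    set d := f'.natDegree with hddef
    set lead := f'.coeff d with hleaddef
    have hlead : lead ≠ 0 := Polynomial.leadingCoeff_ne_zero.mpr hf'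
    have hd : d ≤ k - 1 := by
      rw [hddef, natDegree_finSuccEquiv]; exact hred 0
    have hdD : d ≤ D := by
      rw [hddef, natDegree_finSuccEquiv]
      exact le_trans (degreeOf_le_totalDegree f 0) hD
    have hleadred : ∀ j, lead.degreeOf j ≤ k - 1 :=
      fun j => le_trans (degreeOf_coeff_finSuccEquiv f j d) (hred j.succ)
    have hleadD : lead.totalDegree ≤ D - d := by
      have h9 := totalDegree_coeff_finSuccEquiv_add_le f d hlead
      rw [← hf'def, ← hleaddef] at h9
      omega
    have hIH := IH lead hlead hleadred (D - d) hleadD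
    -- counting
    set T := (univ.filter fun y : Fin n → F => eval y lead ≠ 0) with hTdef
    set S := (univ.filter fun x : Fin (n+1) → F => eval x f ≠ 0) with hSdef
    have hcount : T.card * (k - d) ≤ S.card := by
      have hdisj : ∀ y ∈ T, ∀ y' ∈ T, y ≠ y' →
          Disjoint ((univ.filter fun t : F =>
              Polynomial.eval t (Polynomial.map (eval y) f') ≠ 0).image (fun t => (Fin.cons t y : Fin (n+1) → F)))
            ((univ.filter fun t : F =>
              Polynomial.eval t (Polynomial.map (eval y') f') ≠ 0).image (fun t => (Fin.cons t y' : Fin (n+1) → F))) := by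
        intro y _ y' _ hyy'
        rw [Finset.disjoint_left]
        rintro x hx hx'
        simp only [Finset.mem_image] at hx hx'
        obtain ⟨t, _, rfl⟩ := hx
        obtain ⟨t', _, ht'⟩ := hx'
        apply hyy'
        have := congrArg Fin.tail ht'.symm
        simpa [Fin.tail_cons] using this
      calc T.card * (k - d) = ∑ _y ∈ T, (k - d) := by rw [Finset.sum_const, smul_eq_mul]
        _ ≤ ∑ y ∈ T, ((univ.filter fun t : F =>
              Polynomial.eval t (Polynomial.map (eval y) f') ≠ 0).image (fun t => (Fin.cons t y : Fin (n+1) → F))).card := by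
            apply Finset.sum_le_sum
            intro y hy
            rw [Finset.card_image_of_injective _ (fun t t' htt' => by
              simpa using congrFun htt' 0)]
            have hgy : Polynomial.map (eval y) f' ≠ 0 := by
              intro h0
              have : Polynomial.coeff (Polynomial.map (eval y) f') d = 0 := by rw [h0]; simp
              rw [Polynomial.coeff_map] at this
              simp only [hTdef, mem_filter] at hy
              exact hy.2 this
            refine le_trans ?_ (card_nonroots _ hgy)
            have h8 : (Polynomial.map (eval y) f').natDegree ≤ d := Polynomial.natDegree_map_le
            rw [← hkdef]
            omega
        _ = (T.biUnion fun y => (univ.filter fun t : F =>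
              Polynomial.eval t (Polynomial.map (eval y) f') ≠ 0).image (fun t => (Fin.cons t y : Fin (n+1) → F))).card :=
            (Finset.card_biUnion hdisj).symm
        _ ≤ S.card := by
            apply Finset.card_le_card
            intro x hx
            rw [Finset.mem_biUnion] at hx
            obtain ⟨y, hy, hx⟩ := hx
            rw [Finset.mem_image] at hx
            obtain ⟨t, ht, rfl⟩ := hx
            simp only [hSdef, mem_filter, mem_univ, true_and]
            rw [eval_eq_eval_mv_eval']
            simp only [mem_filter] at ht
            exact ht.2
    -- arithmetic
    have hkpos : (0:ℝ) < (k : ℝ) := by positivity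
    have hdR : (d : ℝ) ≤ (k : ℝ) - 1 := by
      have : (d : ℝ) ≤ ((k - 1 : ℕ) : ℝ) := by exact_mod_cast hd
      rw [Nat.cast_sub (by omega)] at this
      simpa using this
    have hkd : ((k - d : ℕ) : ℝ) = (k:ℝ) - (d:ℝ) := by
      rw [Nat.cast_sub (by omega)]
    have key : (k:ℝ) ^ ((1:ℝ) - (d:ℝ)/((k:ℝ)-1)) ≤ (k:ℝ) - (d:ℝ) := by
      have hw1 : (0:ℝ) ≤ ((k:ℝ) - 1 - d)/((k:ℝ)-1) := by
        apply div_nonneg; linarith; linarith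
      have hw2 : (0:ℝ) ≤ (d:ℝ)/((k:ℝ)-1) := div_nonneg (by positivity) (by linarith)
      have hsum : ((k:ℝ) - 1 - d)/((k:ℝ)-1) + (d:ℝ)/((k:ℝ)-1) = 1 := by
        field_simp
        ring
      have := Real.geom_mean_le_arith_mean2_weighted hw1 hw2 (le_of_lt hkpos) zero_le_one hsum
      rw [Real.one_rpow, mul_one] at this
      have heq1 : ((k:ℝ) - 1 - d)/((k:ℝ)-1) = 1 - (d:ℝ)/((k:ℝ)-1) := by
        field_simp
      have heq2 : ((k:ℝ) - 1 - d)/((k:ℝ)-1) * (k:ℝ) + (d:ℝ)/((k:ℝ)-1) * 1 = (k:ℝ) - d := by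
        field_simp
        ring
      rw [heq2, heq1] at this
      exact this
    calc (k:ℝ) ^ (((n+1 : ℕ) : ℝ) - (D:ℝ)/((k:ℝ)-1))
        = (k:ℝ) ^ ((1:ℝ) - (d:ℝ)/((k:ℝ)-1)) * (k:ℝ) ^ ((n:ℝ) - ((D - d : ℕ):ℝ)/((k:ℝ)-1)) := by
          rw [← Real.rpow_add hkpos]
          congr 1
          rw [Nat.cast_sub hdD]
          push_cast
          field_simp
          ring
      _ ≤ ((k - d : ℕ) : ℝ) * (T.card : ℝ) := by
          rw [hkd]
          apply mul_le_mul key hIH (by positivity) (by linarith)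
      _ ≤ (S.card : ℝ) := by
          rw [← Nat.cast_mul]
          exact_mod_cast (by rw [Nat.mul_comm] at hcount; exact hcount)
open MvPolynomial Finset

lemma eval_aeval_X {F : Type*} [CommRing F] {σt : Type*} (κ : σt → F) (h : Polynomial F) (u : σt) :
    MvPolynomial.eval κ (Polynomial.aeval (MvPolynomial.X u) h) = Polynomial.eval (κ u) h := by
  have := Polynomial.aeval_algHom_apply (MvPolynomial.aeval κ (R:=F)) (MvPolynomial.X u) h
  simp only [MvPolynomial.aeval_X] at this
  rw [show (MvPolynomial.eval κ) ((Polynomial.aeval (MvPolynomial.X u)) h)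
      = (MvPolynomial.aeval κ) ((Polynomial.aeval (MvPolynomial.X u)) h) from rfl, ← this,
    ← Polynomial.coe_aeval_eq_eval]

lemma totalDegree_aeval_X_le {F : Type*} [CommRing F] [Nontrivial F] {σt : Type*}
    (h : Polynomial F) (u : σt) :
    (Polynomial.aeval (MvPolynomial.X u : MvPolynomial σt F) h).totalDegree ≤ h.natDegree := by
  rw [Polynomial.aeval_eq_sum_range]
  refine le_trans (totalDegree_finset_sum _ _) ?_
  rw [Finset.sup_le_iff]
  intro i hi
  refine le_trans (totalDegree_smul_le _ _) ?_
  rw [totalDegree_X_pow]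
  exact Nat.lt_succ_iff.mp (Finset.mem_range.mp hi)

lemma totalDegree_sub_le {F : Type*} [CommRing F] {σt : Type*} (p q : MvPolynomial σt F) :
    (p - q).totalDegree ≤ max p.totalDegree q.totalDegree := by
  rw [sub_eq_add_neg]
  refine le_trans (totalDegree_add _ _) ?_
  rw [totalDegree_neg]

section Card3

variable {F : Type*} [Field F] [Fintype F] [DecidableEq F]

lemma card3_affine (h3 : Fintype.card F = 3) (σ : Equiv.Perm F) :
    ∃ c d : F, ∀ x, σ x = c * x + d := by
  have h30 : (3 : F) = 0 := by
    have := FiniteField.cast_card_eq_zero F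
    rw [h3] at this
    exact_mod_cast this
  have h10 : (1 : F) ≠ 0 := one_ne_zero
  have h1m1 : (1 : F) ≠ -1 := by
    intro h
    exact h10 (by linear_combination -h + h30)
  have h0m1 : (0 : F) ≠ -1 := by
    intro h; exact h10 (by linear_combination h)
  have huniv : (Finset.univ : Finset F) = {0, 1, -1} := by
    symm
    apply Finset.eq_univ_of_card
    rw [h3]
    rw [Finset.card_insert_of_notMem (by simp [h10.symm, h0m1]),
      Finset.card_insert_of_notMem (by simp [h1m1]), Finset.card_singleton]
  have hsum : ∀ g : F → F, ∑ x : F, g x = g 0 + g 1 + g (-1) := by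
    intro g
    rw [show ∑ x : F, g x = ∑ x ∈ (Finset.univ : Finset F), g x from rfl, huniv]
    rw [Finset.sum_insert (by simp [h10.symm, h0m1]),
      Finset.sum_insert (by simp [h1m1]), Finset.sum_singleton]
    ring
  have hS : σ 0 + σ 1 + σ (-1) = 0 + 1 + (-1) := by
    rw [← hsum (fun x => x), ← hsum (fun x => σ x)]
    exact Equiv.sum_comp σ id
  refine ⟨σ 1 - σ 0, σ 0, fun x => ?_⟩
  have hx : x = 0 ∨ x = 1 ∨ x = -1 := by
    have : x ∈ (Finset.univ : Finset F) := Finset.mem_univ x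
    rw [huniv] at this
    simpa using this
  rcases hx with rfl | rfl | rfl
  · ring
  · ring
  · linear_combination hS - σ 0 * h30

end Card3

section Gadget

variable {F : Type*} [Field F] [Fintype F] [DecidableEq F]

lemma gadget (hk : 3 ≤ Fintype.card F) (σ : Equiv.Perm F) (a b : F) (hab : b ≠ σ a) :
    ∃ q : MvPolynomial (Fin 2) F, q.totalDegree ≤ Fintype.card F - 2 ∧
      (∀ x : F, eval ![x, σ x] q = 0) ∧ eval ![a, b] q ≠ 0 := by
  rcases eq_or_lt_of_le hk with h3 | h4
  · -- card = 3
    obtain ⟨c, d, hcd⟩ := card3_affine h3.symm σ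
    refine ⟨X 1 - (C c * X 0 + C d), ?_, ?_, ?_⟩
    · refine le_trans (totalDegree_sub_le _ _) ?_
      rw [max_le_iff]
      constructor
      · rw [totalDegree_X]; omega
      · refine le_trans (totalDegree_add _ _) ?_
        rw [max_le_iff]
        refine ⟨le_trans (totalDegree_mul _ _) ?_, ?_⟩
        · rw [totalDegree_C, totalDegree_X]; omega
        · rw [totalDegree_C]; omega
    · intro x
      simp [hcd x]
    · simp only [map_sub, map_add, map_mul, eval_X, eval_C]
      simp only [Matrix.cons_val_one, Matrix.cons_val_zero, Matrix.head_cons]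
      rw [← hcd a]
      exact sub_ne_zero_of_ne hab
  · -- card ≥ 4
    set k := Fintype.card F with hk4
    have hs : σ.symm b ≠ a := fun h => hab (by rw [← h, Equiv.apply_symm_apply])
    obtain ⟨c, hc⟩ : ∃ c : F, c ∉ ({a, σ.symm b} : Finset F) := by
      by_contra hcon
      push_neg at hcon
      have : (Finset.univ : Finset F) ⊆ {a, σ.symm b} := fun x _ => hcon x
      have := Finset.card_le_card this
      rw [Finset.card_univ] at this
      have h2 : ({a, σ.symm b} : Finset F).card ≤ 2 := Finset.card_insert_le _ _ |>.trans (by simp)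
      omega
    simp only [Finset.mem_insert, Finset.mem_singleton, not_or] at hc
    set T' : Finset F := {σ.symm b, c} with hT'
    set T : Finset F := Finset.univ \ T' with hT
    have hT'card : T'.card = 2 := by
      rw [hT', Finset.card_insert_of_notMem (by simp [Ne.symm hc.2]), Finset.card_singleton]
    have hTcard : T.card = k - 2 := by
      rw [hT, Finset.card_sdiff_of_subset (Finset.subset_univ _), Finset.card_univ, hT'card]
    set h₁ : Polynomial F := Lagrange.interpolate T id (fun x => σ x) with hh₁
    set h₂ : Polynomial F := Lagrange.interpolate ({b, σ c} : Finset F) id (fun y => σ.symm y) with hh₂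
    have hd₁ : h₁.natDegree ≤ k - 3 := by
      rcases eq_or_ne h₁ 0 with h | h
      · rw [h, Polynomial.natDegree_zero]; omega
      · have := Lagrange.degree_interpolate_lt (s := T) (v := id) (fun x => σ x) (Set.injOn_id _)
        rw [← hh₁, hTcard] at this
        have := (Polynomial.natDegree_lt_iff_degree_lt h).mpr this
        omega
    have hd₂ : h₂.natDegree ≤ 1 := by
      rcases eq_or_ne h₂ 0 with h | h
      · rw [h, Polynomial.natDegree_zero]; omega
      · have := Lagrange.degree_interpolate_lt (s := ({b, σ c} : Finset F)) (v := id)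
          (fun y => σ.symm y) (Set.injOn_id _)
        rw [← hh₂] at this
        have hcard2 : ({b, σ c} : Finset F).card ≤ 2 := Finset.card_insert_le _ _ |>.trans (by simp)
        have h5 := (Polynomial.natDegree_lt_iff_degree_lt h).mpr
          (lt_of_lt_of_le this (by exact_mod_cast hcard2))
        omega
    refine ⟨(X 1 - Polynomial.aeval (X 0) h₁) * (X 0 - Polynomial.aeval (X 1) h₂), ?_, ?_, ?_⟩
    · refine le_trans (totalDegree_mul _ _) ?_
      have hb1 : (X 1 - Polynomial.aeval (X 0) h₁ : MvPolynomial (Fin 2) F).totalDegree ≤ k - 3 := by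
        refine le_trans (totalDegree_sub_le _ _) ?_
        rw [max_le_iff, totalDegree_X]
        exact ⟨by omega, le_trans (totalDegree_aeval_X_le _ _) hd₁⟩
      have hb2 : (X 0 - Polynomial.aeval (X 1) h₂ : MvPolynomial (Fin 2) F).totalDegree ≤ 1 := by
        refine le_trans (totalDegree_sub_le _ _) ?_
        rw [max_le_iff, totalDegree_X]
        exact ⟨le_refl _, le_trans (totalDegree_aeval_X_le _ _) hd₂⟩
      omega
    · intro x
      have hnode₂ : ∀ y ∈ ({b, σ c} : Finset F), Polynomial.eval y h₂ = σ.symm y := by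
        intro y hy
        rw [hh₂]
        have := Lagrange.eval_interpolate_at_node (s := ({b, σ c} : Finset F)) (i := y)
          (v := id) (fun y => σ.symm y) (Set.injOn_id _) hy
        simpa using this
      have hnode₁ : ∀ x ∈ T, Polynomial.eval x h₁ = σ x := by
        intro x hx
        rw [hh₁]
        have := Lagrange.eval_interpolate_at_node (s := T) (i := x)
          (v := id) (fun x => σ x) (Set.injOn_id _) hx
        simpa using this
      rw [map_mul]
      by_cases hx : x ∈ T'
      · have : eval ![x, σ x] (X 0 - Polynomial.aeval (X 1) h₂) = 0 := by
          rw [map_sub, eval_X, eval_aeval_X]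
          simp only [Matrix.cons_val_one, Matrix.head_cons, Matrix.cons_val_zero]
          rcases Finset.mem_insert.mp hx with h | hx2
          · rw [h, show σ (σ.symm b) = b from Equiv.apply_symm_apply _ _,
              hnode₂ b (by simp), ← h]
            simp
          · rw [Finset.mem_singleton] at hx2
            rw [hx2, hnode₂ (σ c) (by simp)]
            simp
        rw [this, mul_zero]
      · have hxT : x ∈ T := by rw [hT]; simp [hx]
        have : eval ![x, σ x] (X 1 - Polynomial.aeval (X 0) h₁) = 0 := by
          rw [map_sub, eval_X, eval_aeval_X]
          simp only [Matrix.cons_val_one, Matrix.head_cons, Matrix.cons_val_zero]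
          rw [hnode₁ x hxT]
          simp
        rw [this, zero_mul]
    · have hnode₂ : Polynomial.eval b h₂ = σ.symm b := by
        rw [hh₂]
        have := Lagrange.eval_interpolate_at_node (s := ({b, σ c} : Finset F)) (i := b)
          (v := id) (fun y => σ.symm y) (Set.injOn_id _) (by simp)
        simpa using this
      have haT : a ∈ T := by
        rw [hT, hT']
        simp [Ne.symm hs, Ne.symm hc.1]
      have hnode₁ : Polynomial.eval a h₁ = σ a := by
        rw [hh₁]
        have := Lagrange.eval_interpolate_at_node (s := T) (i := a)
          (v := id) (fun x => σ x) (Set.injOn_id _) haT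
        simpa using this
      rw [map_mul]
      apply mul_ne_zero
      · rw [map_sub, eval_X, eval_aeval_X]
        simp only [Matrix.cons_val_one, Matrix.head_cons, Matrix.cons_val_zero]
        rw [hnode₁]
        exact sub_ne_zero_of_ne hab
      · rw [map_sub, eval_X, eval_aeval_X]
        simp only [Matrix.cons_val_one, Matrix.head_cons, Matrix.cons_val_zero]
        rw [hnode₂]
        exact sub_ne_zero_of_ne (Ne.symm hs)

end Gadget
open Finset

lemma exists_parent {V : Type*} (G : SimpleGraph V) (hG : G.Connected) (r v : V) (hv : v ≠ r) :
    ∃ u, G.Adj u v ∧ G.dist r u < G.dist r v := by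
  obtain ⟨p, hp⟩ := hG.exists_walk_length_eq_dist v r
  obtain ⟨u, hadj, p', rfl⟩ := p.exists_eq_cons_of_ne hv
  refine ⟨u, hadj.symm, ?_⟩
  have h1 : G.dist r u ≤ p'.length := SimpleGraph.dist_comm (G := G) ▸ SimpleGraph.dist_le p'
  have h2 : G.dist r v = p'.length + 1 := by
    rw [SimpleGraph.dist_comm (G := G), ← hp, SimpleGraph.Walk.length_cons]
  omega

noncomputable def tauFun {V F : Type*} (d : V → ℕ) (parent : V → V)
    (h : ∀ v, 0 < d v → d (parent v) < d v) (ρ : V → V → Equiv.Perm F) (v : V) :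
    Equiv.Perm F :=
  if hv : 0 < d v then ρ (parent v) v * tauFun d parent h ρ (parent v) else 1
  termination_by d v
  decreasing_by exact h v hv

lemma tauFun_eq {V F : Type*} (d : V → ℕ) (parent : V → V)
    (h : ∀ v, 0 < d v → d (parent v) < d v) (ρ : V → V → Equiv.Perm F) (v : V)
    (hv : 0 < d v) :
    tauFun d parent h ρ v = ρ (parent v) v * tauFun d parent h ρ (parent v) := by
  rw [tauFun]
  simp [hv]

lemma comp_vec2 {V F : Type*} (κ : V → F) (u v : V) :
    κ ∘ (![u, v] : Fin 2 → V) = ![κ u, κ v] := by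
  funext i
  fin_cases i <;> rfl

section Main

lemma permCongr_inv {α β : Type*} (e : α ≃ β) (s : Equiv.Perm α) :
    (e.permCongr s)⁻¹ = e.permCongr s⁻¹ := by
  ext x
  simp [Equiv.Perm.inv_def, Equiv.permCongr_def, Equiv.symm_trans_apply, Equiv.trans_apply]

/-- For a prime power `k > 2` and a connected simple graph `G` with
`χ_DP(G) ≤ k` and `m ≤ 2n - (k-3)/(k-2)`, every `S_A`-labeling of `G` (encoded by a
symmetric assignment of permutations of the `k`-set `A` to oriented edges) has at least
`k^(((2n-m)(k-2) - (k-3))/(k-1))` proper colorings, i.e. `P_DP(G,k)` is at least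
this quantity. -/
theorem stmt_8 {V : Type} [Fintype V] [DecidableEq V] (G : SimpleGraph V)
    [DecidableRel G.Adj] (hG : G.Connected)
    (n m k : ℕ) (hn : Fintype.card V = n) (hm : G.edgeFinset.card = m)
    (hk : 2 < k) (hpp : IsPrimePow k)
    (A : Type) [Fintype A] (hA : Fintype.card A = k)
    (hχ : ∀ σ : V → V → Equiv.Perm A, (∀ u v, σ v u = (σ u v)⁻¹) →
      ∃ κ : V → A, ∀ u v, G.Adj u v → σ u v (κ u) ≠ κ v)
    (hmn : (m : ℝ) ≤ 2 * n - ((k : ℝ) - 3) / ((k : ℝ) - 2)) :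
    ∀ σ : V → V → Equiv.Perm A, (∀ u v, σ v u = (σ u v)⁻¹) →
      (k : ℝ) ^ (((2 * (n : ℝ) - m) * ((k : ℝ) - 2) - ((k : ℝ) - 3)) / ((k : ℝ) - 1)) ≤
        (Nat.card {κ : V → A // ∀ u v, G.Adj u v → σ u v (κ u) ≠ κ v} : ℝ) := by
  classical
  intro σ hsym
  -- set up the finite field
  obtain ⟨p, e, hpprime, hepos, hpe⟩ := hpp
  haveI : Fact (Nat.Prime p) := ⟨Nat.prime_iff.mpr hpprime⟩
  obtain ⟨F, hFf, hFt, hcard⟩ : ∃ (F : Type) (_ : Field F) (_ : Fintype F),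
      Fintype.card F = k := by
    letI : Fintype (GaloisField p e) := Fintype.ofFinite _
    exact ⟨GaloisField p e, inferInstance, inferInstance,
      by rw [← Nat.card_eq_fintype_card, GaloisField.card p e hepos.ne']; exact hpe⟩
  have hk3 : 3 ≤ Fintype.card F := by omega
  have eA : A ≃ F := Fintype.equivOfCardEq (by rw [hA, hcard])
  -- transfer σ to F
  set ρ : V → V → Equiv.Perm F := fun u v => eA.permCongr (σ u v) with hρ
  have hρsym : ∀ u v, ρ v u = (ρ u v)⁻¹ := by
    intro u v
    simp only [hρ]
    rw [hsym u v, permCongr_inv]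
  -- root and parent structure
  haveI : Nonempty V := hG.nonempty
  set r : V := Classical.arbitrary V with hr
  set d : V → ℕ := fun v => G.dist r v with hd
  have hd0 : ∀ v : V, 0 < d v ↔ v ≠ r := by
    intro v
    simp only [hd]
    constructor
    · rintro h rfl
      simp [SimpleGraph.dist_self] at h
    · intro h
      exact hG.pos_dist_of_ne (Ne.symm h)
  have hparex : ∀ v : V, v ≠ r → ∃ u, G.Adj u v ∧ G.dist r u < G.dist r v :=
    fun v hv => exists_parent G hG r v hv
  set parent : V → V := fun v =>
    if hv : v = r then v else Classical.choose (hparex v hv) with hpar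
  have hparent : ∀ v : V, v ≠ r → G.Adj (parent v) v ∧ d (parent v) < d v := by
    intro v hv
    have h1 := Classical.choose_spec (hparex v hv)
    simp only [hpar, hd, dif_neg hv]
    exact h1
  have hdd : ∀ v, 0 < d v → d (parent v) < d v :=
    fun v hv => (hparent v ((hd0 v).mp hv)).2
  -- twist with tau
  set tau : V → Equiv.Perm F := tauFun d parent hdd ρ with htau
  set σh : V → V → Equiv.Perm F := fun u v => (tau v)⁻¹ * ρ u v * tau u with hσh
  have hσhsym : ∀ u v, σh v u = (σh u v)⁻¹ := by
    intro u v
    simp only [hσh]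
    rw [hρsym u v]
    group
  have hσhpar : ∀ v, v ≠ r → σh (parent v) v = 1 := by
    intro v hv
    have h1 := tauFun_eq d parent hdd ρ v ((hd0 v).mpr hv)
    rw [← htau] at h1
    simp only [hσh]
    rw [h1]
    group
  have hσh1 : ∀ u v : V, ((v ≠ r ∧ u = parent v) ∨ (u ≠ r ∧ v = parent u)) → σh u v = 1 := by
    rintro u v (⟨hvr, rfl⟩ | ⟨hur, rfl⟩)
    · exact hσhpar v hvr
    · rw [hσhsym, hσhpar u hur, inv_one]
  -- proper coloring for σh from the DP-colorability hypothesis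
  set σA : V → V → Equiv.Perm A := fun u v => eA.symm.permCongr (σh u v) with hσA
  have hσAsym : ∀ u v, σA v u = (σA u v)⁻¹ := by
    intro u v
    simp only [hσA]
    rw [hσhsym u v, permCongr_inv]
  obtain ⟨κA, hκA⟩ := hχ σA hσAsym
  set κs : V → F := fun v => eA (κA v) with hκs0
  have hκs : ∀ u v, G.Adj u v → σh u v (κs u) ≠ κs v := by
    intro u v huv hEq
    apply hκA u v huv
    have h1 : σA u v (κA u) = eA.symm (σh u v (κs u)) := by
      simp [hσA, Equiv.permCongr_apply, hκs0]
    rw [h1, hEq]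
    simp [hκs0]
  -- gadget polynomials
  have hgad : ∀ u v, G.Adj u v → ∃ q : MvPolynomial (Fin 2) F,
      q.totalDegree ≤ Fintype.card F - 2 ∧
      (∀ x : F, MvPolynomial.eval ![x, σh u v x] q = 0) ∧
      MvPolynomial.eval ![κs u, κs v] q ≠ 0 :=
    fun u v huv => gadget hk3 (σh u v) (κs u) (κs v) (Ne.symm (hκs u v huv))
  choose qg hq1 hq2 hq3 using hgad
  -- orientation of edges
  have w : V ≃ Fin n := Fintype.equivFinOfCardEq hn
  set isP : V × V → Prop := fun e =>
    (e.2 ≠ r ∧ e.1 = parent e.2) ∨ (e.1 ≠ r ∧ e.2 = parent e.1) with hisP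
  set Dor : Finset (V × V) :=
    univ.filter (fun e => G.Adj e.1 e.2 ∧ (w e.1 : ℕ) < (w e.2 : ℕ)) with hDor
  set factor : V × V → MvPolynomial V F := fun e =>
    if isP e then MvPolynomial.X e.2 - MvPolynomial.X e.1
    else if h : G.Adj e.1 e.2 then MvPolynomial.rename ![e.1, e.2] (qg e.1 e.2 h) else 1
    with hfactor
  set budget : V × V → ℕ := fun e => if isP e then 1 else Fintype.card F - 2 with hbudget
  set P : MvPolynomial V F := ∏ e ∈ Dor, factor e with hP
  set S : ℕ := ∑ e ∈ Dor, budget e with hS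
  -- degree bound
  have hPdeg : P.totalDegree ≤ S := by
    rw [hP, hS]
    refine le_trans (MvPolynomial.totalDegree_finset_prod _ _) (Finset.sum_le_sum ?_)
    intro e he
    simp only [hfactor, hbudget]
    by_cases hp : isP e
    · rw [if_pos hp, if_pos hp]
      refine le_trans (totalDegree_sub_le _ _) ?_
      rw [MvPolynomial.totalDegree_X, MvPolynomial.totalDegree_X]
      omega
    · have hadj : G.Adj e.1 e.2 := by
        rw [hDor] at he
        exact (Finset.mem_filter.mp he).2.1
      rw [if_neg hp, if_neg hp, dif_pos hadj]
      exact le_trans (MvPolynomial.totalDegree_rename_le _ _) (hq1 e.1 e.2 hadj)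
  -- nonvanishing at κs
  have hPκs : MvPolynomial.eval κs P ≠ 0 := by
    rw [hP, map_prod, Finset.prod_ne_zero_iff]
    intro e he
    have hadj : G.Adj e.1 e.2 := by
      rw [hDor] at he
      exact (Finset.mem_filter.mp he).2.1
    simp only [hfactor]
    by_cases hp : isP e
    · rw [if_pos hp]
      rw [map_sub, MvPolynomial.eval_X, MvPolynomial.eval_X]
      have h1 : σh e.1 e.2 = 1 := hσh1 e.1 e.2 hp
      have h2 := hκs e.1 e.2 hadj
      rw [h1] at h2
      simp only [Equiv.Perm.one_apply] at h2
      exact sub_ne_zero_of_ne (Ne.symm h2)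
    · rw [if_neg hp, dif_pos hadj, MvPolynomial.eval_rename, comp_vec2]
      exact hq3 e.1 e.2 hadj
  -- nonvanishing implies properness
  have hproper : ∀ κ : V → F, MvPolynomial.eval κ P ≠ 0 →
      ∀ u v, G.Adj u v → σh u v (κ u) ≠ κ v := by
    intro κ hPne u v huv
    rw [hP, map_prod, Finset.prod_ne_zero_iff] at hPne
    have key : ∀ a b : V, (a, b) ∈ Dor → σh a b (κ a) ≠ κ b := by
      intro a b hab hEq
      have hadj : G.Adj a b := by
        rw [hDor] at hab
        exact (Finset.mem_filter.mp hab).2.1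
      have hfac := hPne (a, b) hab
      simp only [hfactor] at hfac
      by_cases hp : isP (a, b)
      · rw [if_pos hp] at hfac
        have h1 : σh a b = 1 := hσh1 a b hp
        rw [h1] at hEq
        simp only [Equiv.Perm.one_apply] at hEq
        apply hfac
        rw [map_sub, MvPolynomial.eval_X, MvPolynomial.eval_X, hEq, sub_self]
      · rw [if_neg hp, dif_pos hadj] at hfac
        apply hfac
        rw [MvPolynomial.eval_rename, comp_vec2, ← hEq]
        exact hq2 a b hadj (κ a)
    have horient : ((u, v) ∈ Dor) ∨ ((v, u) ∈ Dor) := by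
      have hne : (w u : ℕ) ≠ (w v : ℕ) := by
        intro h
        exact (G.ne_of_adj huv) (w.injective (Fin.ext h))
      rcases lt_or_gt_of_ne hne with h | h
      · left; rw [hDor]; simp only [Finset.mem_filter, Finset.mem_univ, true_and]; exact ⟨huv, h⟩
      · right; rw [hDor]; simp only [Finset.mem_filter, Finset.mem_univ, true_and]; exact ⟨huv.symm, h⟩
    rcases horient with h | h
    · exact key u v h
    · intro hEq
      apply key v u h
      rw [hσhsym u v, ← hEq]
      simp
  -- rename to Fin n and reduce
  set Q : MvPolynomial (Fin n) F := reducePoly (MvPolynomial.rename w P) with hQ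
  have hQeval : ∀ x : Fin n → F, MvPolynomial.eval x Q = MvPolynomial.eval (x ∘ w) P := by
    intro x
    rw [hQ, eval_reducePoly, MvPolynomial.eval_rename]
  have hQne : Q ≠ 0 := by
    intro h0
    apply hPκs
    have h1 := hQeval (κs ∘ ⇑w.symm)
    rw [h0, map_zero] at h1
    have hcomp : (κs ∘ ⇑w.symm) ∘ ⇑w = κs := by
      funext v; simp
    rw [hcomp] at h1
    exact h1.symm
  have hQred : ∀ i, Q.degreeOf i ≤ Fintype.card F - 1 := fun i => degreeOf_reducePoly_le _ i
  have hQtd : Q.totalDegree ≤ S :=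
    le_trans (totalDegree_reducePoly_le _) (le_trans (MvPolynomial.totalDegree_rename_le _ _) hPdeg)
  have hAF := af_lemma n Q hQne hQred S hQtd
  rw [hcard] at hAF
  -- cardinality transfers
  have hN1 : Nat.card {κ : V → A // ∀ u v, G.Adj u v → σ u v (κ u) ≠ κ v} =
      Nat.card {κ : V → F // ∀ u v, G.Adj u v → σh u v (κ u) ≠ κ v} := by
    have E1 : {κ : V → A // ∀ u v, G.Adj u v → σ u v (κ u) ≠ κ v} ≃
        {κ : V → F // ∀ u v, G.Adj u v → ρ u v (κ u) ≠ κ v} := by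
      apply Equiv.subtypeEquiv (Equiv.piCongrRight fun _ => eA)
      intro κ
      constructor
      · intro hκ u v huv hEq
        apply hκ u v huv
        apply eA.injective
        simpa [hρ, Equiv.permCongr_apply, Equiv.piCongrRight_apply, Pi.map_apply,
          Equiv.symm_apply_apply] using hEq
      · intro hκ u v huv hEq
        apply hκ u v huv
        simp only [Equiv.piCongrRight_apply, Pi.map_apply, hρ, Equiv.permCongr_apply,
          Equiv.symm_apply_apply]
        rw [hEq]
    have E2 : {κ : V → F // ∀ u v, G.Adj u v → ρ u v (κ u) ≠ κ v} ≃
        {κ : V → F // ∀ u v, G.Adj u v → σh u v (κ u) ≠ κ v} := by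
      apply Equiv.subtypeEquiv (Equiv.piCongrRight fun v => ((tau v)⁻¹ : Equiv.Perm F))
      intro κ
      constructor
      · intro hκ u v huv hEq
        apply hκ u v huv
        have h3 : tau u (((tau u)⁻¹ : Equiv.Perm F) (κ u)) = κ u :=
          Equiv.apply_symm_apply _ _
        have h2 : ((tau v)⁻¹ : Equiv.Perm F) (ρ u v (κ u)) =
            ((tau v)⁻¹ : Equiv.Perm F) (κ v) := by
          simpa [hσh, Equiv.Perm.mul_apply, Equiv.piCongrRight_apply, Pi.map_apply, h3] using hEq
        exact ((tau v)⁻¹ : Equiv.Perm F).injective h2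
      · intro hκ u v huv hEq
        apply hκ u v huv
        simp only [Equiv.piCongrRight_apply, Pi.map_apply, hσh, Equiv.Perm.mul_apply]
        rw [show ∀ (e : Equiv.Perm F) (x : F), e (e⁻¹ x) = x from fun e x => e.apply_symm_apply x, hEq]
    exact Nat.card_congr (E1.trans E2)
  have hN2 : Nat.card {κ : V → F // ∀ u v, G.Adj u v → σh u v (κ u) ≠ κ v} =
      (univ.filter fun κ : V → F => ∀ u v, G.Adj u v → σh u v (κ u) ≠ κ v).card := by
    rw [Nat.card_eq_fintype_card, Fintype.card_subtype]
  have hInj : (univ.filter fun x : Fin n → F => MvPolynomial.eval x Q ≠ 0).card ≤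
      (univ.filter fun κ : V → F => ∀ u v, G.Adj u v → σh u v (κ u) ≠ κ v).card := by
    apply Finset.card_le_card_of_injOn (fun x => x ∘ ⇑w)
    · intro x hx
      rw [Finset.mem_coe, Finset.mem_filter] at hx ⊢
      refine ⟨Finset.mem_univ _, ?_⟩
      apply hproper
      rw [← hQeval]
      exact hx.2
    · intro x _ x' _ hxx'
      funext i
      have h1 := congrFun hxx' (w.symm i)
      simpa using h1
  -- edge counting
  have hDorcard : Dor.card = m := by
    rw [← hm]
    apply Finset.card_bij (s := Dor) (t := G.edgeFinset) (fun e _ => Sym2.mk e.1 e.2)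
    · intro e he
      rw [hDor] at he
      rw [SimpleGraph.mem_edgeFinset]
      exact (Finset.mem_filter.mp he).2.1
    · rintro ⟨x1, x2⟩ he ⟨y1, y2⟩ he' hee'
      rw [hDor, Finset.mem_filter] at he he'
      rw [Sym2.mk_eq_mk_iff] at hee'
      rcases hee' with h | h
      · exact h
      · exfalso
        have h1 := he.2.2
        have h2 := he'.2.2
        simp only [Prod.swap_prod_mk, Prod.mk.injEq] at h
        obtain ⟨ha, hb⟩ := h
        subst ha
        subst hb
        simp only at h1 h2
        exact absurd h1 (Nat.lt_asymm h2)
    · intro s hs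
      rw [SimpleGraph.mem_edgeFinset] at hs
      induction s with
      | _ u v =>
        have hadj : G.Adj u v := hs
        have hne : (w u : ℕ) ≠ (w v : ℕ) := by
          intro h
          exact (G.ne_of_adj hadj) (w.injective (Fin.ext h))
        rcases lt_or_gt_of_ne hne with h | h
        · exact ⟨(u, v), by
            rw [hDor]; simp only [Finset.mem_filter, Finset.mem_univ, true_and]; exact ⟨hadj, h⟩, rfl⟩
        · exact ⟨(v, u), by
            rw [hDor]; simp only [Finset.mem_filter, Finset.mem_univ, true_and]; exact ⟨hadj.symm, h⟩,
            Sym2.eq_swap⟩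
  set t : ℕ := (Dor.filter isP).card with ht
  set t' : ℕ := (Dor.filter fun e => ¬ isP e).card with ht'
  have htt' : t + t' = m := by
    rw [ht, ht', Finset.card_filter_add_card_filter_not, hDorcard]
  have hSval : S = t + t' * (k - 2) := by
    rw [hS, ← Finset.sum_filter_add_sum_filter_not Dor isP]
    congr 1
    · rw [Finset.sum_congr rfl (fun e he => ?_), Finset.sum_const, smul_eq_mul, mul_one, ht]
      simp only [hbudget]
      rw [if_pos (Finset.mem_filter.mp he).2]
    · rw [Finset.sum_congr rfl (fun e he => ?_), Finset.sum_const, smul_eq_mul, ht']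
      simp only [hbudget]
      rw [if_neg (Finset.mem_filter.mp he).2, hcard]
  have htn : n - 1 ≤ t := by
    rw [ht]
    have hcount := Finset.card_le_card_of_injOn
      (f := fun v => if (w (parent v) : ℕ) < (w v : ℕ) then (parent v, v) else (v, parent v))
      (s := univ.erase r) (t := Dor.filter isP) ?_ ?_
    · rw [Finset.card_erase_of_mem (Finset.mem_univ r), Finset.card_univ, hn] at hcount
      exact hcount
    · intro v hv
      dsimp only
      have hvr : v ≠ r := (Finset.mem_erase.mp hv).1
      obtain ⟨hadj, _⟩ := hparent v hvr
      rw [Finset.mem_coe, Finset.mem_filter, hDor, Finset.mem_filter]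
      by_cases ho : (w (parent v) : ℕ) < (w v : ℕ)
      · rw [if_pos ho]
        exact ⟨⟨Finset.mem_univ _, hadj, ho⟩, Or.inl ⟨hvr, rfl⟩⟩
      · rw [if_neg ho]
        have hne : (w v : ℕ) ≠ (w (parent v) : ℕ) := by
          intro h
          exact (G.ne_of_adj hadj) (w.injective (Fin.ext h)).symm
        refine ⟨⟨Finset.mem_univ _, hadj.symm,
          Nat.lt_of_le_of_ne (Nat.le_of_not_lt ho) hne⟩, Or.inr ⟨hvr, rfl⟩⟩
    · intro v hv v' hv' hvv'
      dsimp only at hvv'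
      have hvr : v ≠ r := (Finset.mem_erase.mp hv).1
      have hv'r : v' ≠ r := (Finset.mem_erase.mp hv').1
      have hd1 := (hparent v hvr).2
      have hd2 := (hparent v' hv'r).2
      by_cases h1 : (w (parent v) : ℕ) < (w v : ℕ) <;>
        by_cases h2 : (w (parent v') : ℕ) < (w v' : ℕ)
      · rw [if_pos h1, if_pos h2, Prod.mk.injEq] at hvv'
        exact hvv'.2
      · rw [if_pos h1, if_neg h2, Prod.mk.injEq] at hvv'
        exfalso
        obtain ⟨ha, hb⟩ := hvv'
        have c1 : d v < d v' := by rw [hb]; exact hd2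
        have c2 : d v' < d v := by rw [← ha]; exact hd1
        exact absurd c1 (Nat.lt_asymm c2)
      · rw [if_neg h1, if_pos h2, Prod.mk.injEq] at hvv'
        exfalso
        obtain ⟨ha, hb⟩ := hvv'
        have c1 : d v < d v' := by rw [ha]; exact hd2
        have c2 : d v' < d v := by rw [← hb]; exact hd1
        exact absurd c1 (Nat.lt_asymm c2)
      · rw [if_neg h1, if_neg h2, Prod.mk.injEq] at hvv'
        exact hvv'.1
  -- final arithmetic
  have hkR1 : (1 : ℝ) ≤ (k : ℝ) := by exact_mod_cast Nat.one_le_of_lt hk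
  have hkR3 : (3 : ℝ) ≤ (k : ℝ) := by exact_mod_cast hk
  have hkm1 : (0 : ℝ) < (k : ℝ) - 1 := by linarith
  have hn1 : 1 ≤ n := by rw [← hn]; exact Fintype.card_pos
  have hnt : n ≤ t + 1 := Nat.sub_le_iff_le_add.mp htn
  have htR : ((n : ℝ) - 1) ≤ (t : ℝ) := by
    have h1 : (n : ℝ) ≤ (t : ℝ) + 1 := by exact_mod_cast hnt
    linarith
  have hmtR : (t : ℝ) + (t' : ℝ) = (m : ℝ) := by exact_mod_cast htt'
  have hSR : (S : ℝ) = (t : ℝ) + (t' : ℝ) * ((k : ℝ) - 2) := by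
    rw [hSval, Nat.cast_add, Nat.cast_mul, Nat.cast_sub hk.le]
    norm_num
  have hexp : ((2 * (n : ℝ) - m) * ((k : ℝ) - 2) - ((k : ℝ) - 3)) / ((k : ℝ) - 1) ≤
      (n : ℝ) - (S : ℝ) / ((k : ℝ) - 1) := by
    have hrw : (n : ℝ) - (S : ℝ) / ((k : ℝ) - 1) =
        ((n : ℝ) * ((k : ℝ) - 1) - (S : ℝ)) / ((k : ℝ) - 1) := by
      field_simp
    rw [hrw, div_le_div_iff_of_pos_right hkm1]
    have hprod : ((n : ℝ) - 1) * ((k : ℝ) - 3) ≤ (t : ℝ) * ((k : ℝ) - 3) :=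
      mul_le_mul_of_nonneg_right htR (by linarith)
    nlinarith [hprod, hSR, hmtR]
  rw [hN1, hN2]
  calc (k : ℝ) ^ (((2 * (n : ℝ) - m) * ((k : ℝ) - 2) - ((k : ℝ) - 3)) / ((k : ℝ) - 1))
      ≤ (k : ℝ) ^ ((n : ℝ) - (S : ℝ) / ((k : ℝ) - 1)) :=
        Real.rpow_le_rpow_of_exponent_le hkR1 hexp
    _ ≤ ((univ.filter fun x : Fin n → F => MvPolynomial.eval x Q ≠ 0).card : ℝ) := hAF
    _ ≤ ((univ.filter fun κ : V → F => ∀ u v, G.Adj u v → σh u v (κ u) ≠ κ v).card : ℝ) := by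
        exact_mod_cast hInj

end Main
end Reduce
end

section
/- Let k be a prime power, S a nonempty set of F_k-linear permutations of F_k, and G an n-vertex graph with m edges that is S-k-colorable. If m ≤ (k−1)n, then P_S(G, k) ≥ k^{n − m/(k−1)}. -/
open Real in
lemma key_pow (k t : ℕ) (hk : 1 ≤ k) (ht : t ≤ k - 1) :
    k ^ (k - 1 - t) ≤ (k - t) ^ (k - 1) := by
  rcases eq_or_lt_of_le hk with h1 | h2
  · have : t = 0 := by omega
    subst this; simp [← h1]
  rcases Nat.eq_zero_or_pos t with rfl | htpos
  · simp
  set y := k - t with hy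
  have hy1 : 1 ≤ y := by omega
  have hyk : y ≤ k := by omega
  have hexp : k - 1 - t = y - 1 := by omega
  rw [hexp]
  -- real inequality
  have hcast : ((k : ℝ)) ^ (y - 1) ≤ ((y : ℝ)) ^ (k - 1) := by
    have hk1 : (1 : ℝ) < (k : ℝ) := by exact_mod_cast h2
    have hy0 : (0 : ℝ) < (y : ℝ) := by positivity
    have hconc := strictConcaveOn_log_Ioi.concaveOn
    set a : ℝ := ((k : ℝ) - y) / ((k : ℝ) - 1) with ha_def
    set b : ℝ := ((y : ℝ) - 1) / ((k : ℝ) - 1) with hb_def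
    have hk1' : (0 : ℝ) < (k : ℝ) - 1 := by linarith
    have hyr1 : (1 : ℝ) ≤ (y : ℝ) := by exact_mod_cast hy1
    have hyrk : (y : ℝ) ≤ (k : ℝ) := by exact_mod_cast hyk
    have ha : 0 ≤ a := by apply div_nonneg <;> linarith
    have hb : 0 ≤ b := by apply div_nonneg <;> linarith
    have hab : a + b = 1 := by
      rw [ha_def, hb_def, ← add_div, div_eq_one_iff_eq (by linarith)]
      ring
    have hcomb : a • (1 : ℝ) + b • (k : ℝ) = (y : ℝ) := by
      simp only [smul_eq_mul, ha_def, hb_def]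
      field_simp
      ring
    have hmem1 : (1 : ℝ) ∈ Set.Ioi (0 : ℝ) := by norm_num
    have hmemk : (k : ℝ) ∈ Set.Ioi (0 : ℝ) := by
      simp only [Set.mem_Ioi]; linarith
    have hlog := hconc.2 hmem1 hmemk ha hb hab
    rw [hcomb] at hlog
    simp only [Real.log_one, smul_eq_mul, mul_zero, zero_add] at hlog
    -- hlog : b * log k ≤ log y
    have h2' : ((y : ℝ) - 1) * Real.log k ≤ ((k : ℝ) - 1) * Real.log y := by
      have := mul_le_mul_of_nonneg_left hlog (le_of_lt hk1')
      rw [hb_def] at this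
      calc ((y : ℝ) - 1) * Real.log k = ((k:ℝ)-1) * (((y:ℝ)-1)/((k:ℝ)-1) * Real.log k) := by
            field_simp
        _ ≤ ((k:ℝ)-1) * Real.log y := this
    have hloglhs : Real.log ((k : ℝ) ^ (y - 1)) ≤ Real.log ((y : ℝ) ^ (k - 1)) := by
      rw [Real.log_pow, Real.log_pow]
      have hc1 : ((y - 1 : ℕ) : ℝ) = (y : ℝ) - 1 := by
        have : (1:ℕ) ≤ y := hy1; push_cast [this]; ring
      have hc2 : ((k - 1 : ℕ) : ℝ) = (k : ℝ) - 1 := by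
        push_cast [hk]; ring
      rw [hc1, hc2]; exact h2'
    have hpos1 : (0 : ℝ) < (k : ℝ) ^ (y - 1) := by positivity
    have hpos2 : (0 : ℝ) < (y : ℝ) ^ (k - 1) := by positivity
    exact (Real.log_le_log_iff hpos1 hpos2).mp hloglhs
  have : ((k ^ (y - 1) : ℕ) : ℝ) ≤ (((k - t) ^ (k - 1) : ℕ) : ℝ) := by
    push_cast
    rw [show ((k - t : ℕ) : ℝ) = (y : ℝ) by rw [hy]]
    exact hcast
  exact_mod_cast this


open MvPolynomial in
lemma exists_reduced {F : Type} [Field F] [Fintype F] {k : ℕ} (hk : Fintype.card F = k)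
    (hk2 : 2 ≤ k) {n : ℕ} (P : MvPolynomial (Fin n) F) :
    ∃ Q : MvPolynomial (Fin n) F,
      (∀ x : Fin n → F, eval x Q = eval x P) ∧
      (∀ i, Q.degreeOf i ≤ k - 1) ∧ Q.totalDegree ≤ P.totalDegree := by
  classical
  set red : ℕ → ℕ := fun a => if a = 0 then 0 else (a - 1) % (k - 1) + 1 with hred
  have hred0 : red 0 = 0 := by simp [hred]
  have hredle : ∀ a, red a ≤ a := by
    intro a
    rcases Nat.eq_zero_or_pos a with rfl | ha
    · simp [hred]
    · have hane : a ≠ 0 := by omega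
      simp only [hred, if_neg hane]
      have := Nat.mod_le (a - 1) (k - 1)
      omega
  have hredlt : ∀ a, red a ≤ k - 1 := by
    intro a
    rcases Nat.eq_zero_or_pos a with rfl | ha
    · simp only [hred, if_pos rfl]; omega
    · have hane : a ≠ 0 := by omega
      simp only [hred, if_neg hane]
      have := Nat.mod_lt (a - 1) (y := k - 1) (by omega)
      omega
  have hpow : ∀ (x : F) (a : ℕ), x ^ red a = x ^ a := by
    intro x a
    rcases Nat.eq_zero_or_pos a with rfl | ha
    · simp [hred0]
    rcases eq_or_ne x 0 with rfl | hx
    · have hane : a ≠ 0 := by omega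
      have h2' : red a ≠ 0 := by simp only [hred, if_neg hane]; omega
      rw [zero_pow hane, zero_pow h2']
    · have h1 : x ^ (k - 1) = 1 := by
        rw [← hk]; exact FiniteField.pow_card_sub_one_eq_one x hx
      have hane : a ≠ 0 := by omega
      have ha' : a = red a + (k - 1) * ((a - 1) / (k - 1)) := by
        simp only [hred, if_neg hane]
        have := Nat.div_add_mod (a - 1) (k - 1)
        omega
      conv_rhs => rw [ha']
      rw [pow_add, pow_mul, h1, one_pow, mul_one]
  set E : (Fin n →₀ ℕ) → (Fin n →₀ ℕ) := fun e => e.mapRange red hred0 with hE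
  refine ⟨∑ e ∈ P.support, monomial (E e) (coeff e P), ?_, ?_, ?_⟩
  · intro x
    rw [map_sum, eval_eq' x P]
    apply Finset.sum_congr rfl
    intro e _
    rw [eval_monomial]
    congr 1
    rw [Finsupp.prod_fintype _ _ (fun i => pow_zero (x i))]
    apply Finset.prod_congr rfl
    intro i _
    rw [hE, Finsupp.mapRange_apply, hpow]
  · intro i
    rw [degreeOf_le_iff]
    intro d hd
    have := MvPolynomial.support_sum hd
    simp only [Finset.mem_biUnion] at this
    obtain ⟨e, _, hde⟩ := this
    have := MvPolynomial.support_monomial_subset hde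
    simp only [Finset.mem_singleton] at this
    subst this
    rw [hE, Finsupp.mapRange_apply]
    exact hredlt _
  · refine (totalDegree_finset_sum _ _).trans (Finset.sup_le ?_)
    intro e he
    refine (totalDegree_monomial_le _ _).trans ?_
    have h1 : (E e).sum (fun _ v => v) ≤ e.sum (fun _ v => v) := by
      rw [Finsupp.sum_fintype _ _ (fun _ => rfl), Finsupp.sum_fintype _ _ (fun _ => rfl)]
      apply Finset.sum_le_sum
      intro i _
      rw [hE, Finsupp.mapRange_apply]
      exact hredle _
    exact h1.trans (le_totalDegree he)


open MvPolynomial in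
lemma alon_furedi {F : Type} [Field F] [Fintype F] [DecidableEq F] {k : ℕ}
    (hk : Fintype.card F = k) :
    ∀ (n : ℕ) (P : MvPolynomial (Fin n) F), P ≠ 0 → (∀ i, P.degreeOf i ≤ k - 1) →
      k ^ (n * (k - 1)) ≤
        (Finset.univ.filter fun x : Fin n → F => eval x P ≠ 0).card ^ (k - 1)
          * k ^ P.totalDegree := by
  have hk1 : 1 ≤ k := by rw [← hk]; exact Fintype.card_pos
  intro n
  induction n with
  | zero =>
    intro P hP _
    obtain ⟨c, rfl⟩ := C_surjective (Fin 0) P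
    have hc : c ≠ 0 := fun h => hP (by rw [h, map_zero])
    have : (Finset.univ.filter fun x : Fin 0 → F => eval x (C c) ≠ 0) = Finset.univ := by
      apply Finset.filter_true_of_mem
      intro x _
      simpa using hc
    rw [this]
    simp only [Nat.zero_mul, pow_zero]
    calc 1 ≤ 1 * 1 := by norm_num
      _ ≤ (Finset.univ : Finset (Fin 0 → F)).card ^ (k - 1) * k ^ (C c).totalDegree := by
          apply Nat.mul_le_mul
          · apply Nat.one_le_pow'
          · exact Nat.one_le_pow _ _ (by omega)
  | succ n ih =>
    intro P hP hdeg
    set φ := finSuccEquiv F n P with hφ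
    have hφne : φ ≠ 0 := by
      rw [hφ, Ne, EmbeddingLike.map_eq_zero_iff]; exact hP
    set t := φ.natDegree with ht
    have htk : t ≤ k - 1 := by
      rw [ht, hφ, natDegree_finSuccEquiv]; exact hdeg 0
    set Pt := φ.coeff t with hPt
    have hPtne : Pt ≠ 0 := by
      rw [hPt, ht]; exact Polynomial.leadingCoeff_ne_zero.mpr hφne
    have hPtdeg : ∀ j, Pt.degreeOf j ≤ k - 1 := by
      intro j
      calc Pt.degreeOf j ≤ P.degreeOf j.succ := degreeOf_coeff_finSuccEquiv P j t
        _ ≤ k - 1 := hdeg _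
    have hDsum : Pt.totalDegree + t ≤ P.totalDegree :=
      totalDegree_coeff_finSuccEquiv_add_le P t (hPt ▸ hPtne)
    have IH := ih Pt hPtne hPtdeg
    set A := Finset.univ.filter fun y : Fin n → F => eval y Pt ≠ 0 with hA
    set T := Finset.univ.filter fun x : Fin (n+1) → F => eval x P ≠ 0 with hT
    -- count: T.card ≥ A.card * (k - t)
    have hcount : A.card * (k - t) ≤ T.card := by
      have hfib := Finset.card_eq_sum_card_fiberwise
        (f := fun x : Fin (n+1) → F => x ∘ Fin.succ) (s := T) (t := Finset.univ)
        (fun x _ => Finset.mem_univ _)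
      rw [hfib]
      calc A.card * (k - t) = ∑ _y ∈ A, (k - t) := by rw [Finset.sum_const, smul_eq_mul]
        _ ≤ ∑ y ∈ A, (T.filter fun x => x ∘ Fin.succ = y).card := by
            apply Finset.sum_le_sum
            intro y hy
            -- univariate polynomial
            set Q : Polynomial F := φ.map (eval y) with hQ
            have hyA : eval y Pt ≠ 0 := by
              rw [hA] at hy; exact (Finset.mem_filter.mp hy).2
            have hQco : Q.coeff t ≠ 0 := by
              rw [hQ, Polynomial.coeff_map]; exact hyA
            have hQne : Q ≠ 0 := fun h => hQco (by rw [h, Polynomial.coeff_zero])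
            have hQdeg : Q.natDegree ≤ t := by
              rw [hQ, ht]; exact Polynomial.natDegree_map_le
            have hBcard : k - t ≤
                (Finset.univ.filter fun c : F => Polynomial.eval c Q ≠ 0).card := by
              have hsplit := Finset.card_filter_add_card_filter_not
                (s := Finset.univ) (p := fun c : F => Polynomial.eval c Q ≠ 0)
              have hroots : (Finset.univ.filter fun c : F => ¬ Polynomial.eval c Q ≠ 0).card
                  ≤ t := by
                have hsub : (Finset.univ.filter fun c : F => ¬ Polynomial.eval c Q ≠ 0)
                    ⊆ Q.roots.toFinset := by
                  intro c hc
                  simp only [Finset.mem_filter, not_not] at hc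
                  rw [Multiset.mem_toFinset, Polynomial.mem_roots']
                  exact ⟨hQne, hc.2⟩
                calc _ ≤ Q.roots.toFinset.card := Finset.card_le_card hsub
                  _ ≤ Multiset.card Q.roots := Multiset.toFinset_card_le _
                  _ ≤ Q.natDegree := Polynomial.card_roots' Q
                  _ ≤ t := hQdeg
              have hku : (Finset.univ : Finset F).card = k := by rw [Finset.card_univ, hk]
              omega
            -- inject B into the fiber
            refine hBcard.trans (Finset.card_le_card_of_injOn (fun c => Fin.cons c y) ?_ ?_)
            · intro c hc
              simp only [Finset.mem_coe, Finset.mem_filter, Finset.mem_univ, true_and] at hc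
              simp only [Finset.mem_coe, Finset.mem_filter, hT, Finset.mem_univ, true_and]
              constructor
              · rw [eval_eq_eval_mv_eval']
                exact hc
              · funext i
                simp [Fin.cons_succ]
            · intro c1 _ c2 _ hcc
              have := congrFun hcc 0
              simpa using this
        _ ≤ ∑ y ∈ Finset.univ, (T.filter fun x => x ∘ Fin.succ = y).card := by
            apply Finset.sum_le_sum_of_subset (Finset.filter_subset _ _)
    -- assemble
    have hkey := key_pow k t hk1 htk
    calc k ^ ((n + 1) * (k - 1))
        = k ^ (k - 1 - t) * k ^ t * k ^ (n * (k - 1)) := by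
          rw [← pow_add, ← pow_add]
          congr 1
          have h : (n + 1) * (k - 1) = n * (k - 1) + (k - 1) := by ring
          omega
      _ ≤ (k - t) ^ (k - 1) * k ^ t * (A.card ^ (k - 1) * k ^ Pt.totalDegree) := by
          apply Nat.mul_le_mul
          · exact Nat.mul_le_mul hkey le_rfl
          · exact IH
      _ = ((k - t) * A.card) ^ (k - 1) * k ^ (t + Pt.totalDegree) := by
          rw [mul_pow, pow_add]; ring
      _ ≤ T.card ^ (k - 1) * k ^ P.totalDegree := by
          apply Nat.mul_le_mul
          · apply Nat.pow_le_pow_left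
            rw [mul_comm]
            exact hcount
          · apply Nat.pow_le_pow_right hk1
            omega

open MvPolynomial in
/-- For a prime power `k`, a nonempty set `S` of `F_k`-linear permutations,
and an `S`-`k`-colorable graph `G` with `m ≤ (k-1)n`, every `S`-labeling of `G` has at
least `k^(n - m/(k-1))` proper colorings, i.e. `P_S(G,k) ≥ k^(n - m/(k-1))`. -/
theorem stmt_9 (k : ℕ) (hpp : IsPrimePow k) (F : Type) [Field F] [Fintype F]
    (hcard : Fintype.card F = k)
    (S : Set (Equiv.Perm F)) (hSne : S.Nonempty)
    (hSlin : ∀ π ∈ S, ∃ a b : F, a ≠ 0 ∧ ∀ x : F, π x = a * x + b)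
    {V : Type} [Fintype V] [DecidableEq V] (G : SimpleGraph V) [DecidableRel G.Adj]
    (n m : ℕ) (hn : Fintype.card V = n) (hm : G.edgeFinset.card = m)
    (hcol : ∀ σ : V → V → Equiv.Perm F,
      (∀ u v, σ v u = (σ u v)⁻¹) →
      (∀ u v, G.Adj u v → σ u v ∈ S ∨ (σ u v)⁻¹ ∈ S) →
      ∃ κ : V → F, ∀ u v, G.Adj u v → σ u v (κ u) ≠ κ v)
    (hmn : (m : ℝ) ≤ ((k : ℝ) - 1) * n) :
    ∀ σ : V → V → Equiv.Perm F,
      (∀ u v, σ v u = (σ u v)⁻¹) →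
      (∀ u v, G.Adj u v → σ u v ∈ S ∨ (σ u v)⁻¹ ∈ S) →
      (k : ℝ) ^ ((n : ℝ) - (m : ℝ) / ((k : ℝ) - 1)) ≤
        (Nat.card {κ : V → F // ∀ u v, G.Adj u v → σ u v (κ u) ≠ κ v} : ℝ) := by
  classical
  intro σ hsym hSmem
  have hk2 : 2 ≤ k := by rw [← hcard]; exact Fintype.one_lt_card
  set e : V ≃ Fin n := Fintype.equivFinOfCardEq hn with he
  -- the permutations are linear
  have hlin : ∀ u v : V, ∃ a b : F, ∀ x : F, G.Adj u v → σ u v x = a * x + b := by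
    intro u v
    by_cases h : G.Adj u v
    · rcases hSmem u v h with hmem | hmem
      · obtain ⟨a, b, _, hab⟩ := hSlin _ hmem
        exact ⟨a, b, fun x _ => hab x⟩
      · obtain ⟨a, b, ha, hab⟩ := hSlin _ hmem
        refine ⟨a⁻¹, -(a⁻¹ * b), fun x _ => ?_⟩
        have h1 : (σ u v)⁻¹ (a⁻¹ * x + -(a⁻¹ * b)) = x := by
          rw [hab]
          field_simp
          ring
        calc σ u v x = σ u v ((σ u v)⁻¹ (a⁻¹ * x + -(a⁻¹ * b))) := by rw [h1]
          _ = a⁻¹ * x + -(a⁻¹ * b) := Equiv.apply_symm_apply _ _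
    · exact ⟨1, 0, fun x h' => absurd h' h⟩
  choose a b hab using hlin
  -- representatives of edges
  have hout : ∀ ed : Sym2 V, Sym2.mk ed.out.1 ed.out.2 = ed := fun ed => Quot.out_eq ed
  have hadjout : ∀ ed ∈ G.edgeFinset, G.Adj ed.out.1 ed.out.2 := by
    intro ed hed
    rw [SimpleGraph.mem_edgeFinset] at hed
    rw [← SimpleGraph.mem_edgeSet]
    have h2 : s(ed.out.1, ed.out.2) = ed := hout ed
    rw [h2]
    exact hed
  -- the polynomial
  set P : MvPolynomial (Fin n) F :=
    ∏ ed ∈ G.edgeFinset,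
      (X (e ed.out.2) - C (a ed.out.1 ed.out.2) * X (e ed.out.1)
        - C (b ed.out.1 ed.out.2)) with hP
  have hevalP : ∀ κ : V → F,
      ((MvPolynomial.eval fun i => κ (e.symm i)) P ≠ 0 ↔
        ∀ u v, G.Adj u v → σ u v (κ u) ≠ κ v) := by
    intro κ
    rw [hP, map_prod, Finset.prod_ne_zero_iff]
    have hfac : ∀ ed ∈ G.edgeFinset,
        ((MvPolynomial.eval fun i => κ (e.symm i))
          (X (e ed.out.2) - C (a ed.out.1 ed.out.2) * X (e ed.out.1)
            - C (b ed.out.1 ed.out.2)) ≠ 0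
          ↔ σ ed.out.1 ed.out.2 (κ ed.out.1) ≠ κ ed.out.2) := by
      intro ed hed
      have hadj := hadjout ed hed
      simp only [map_sub, map_mul, eval_X, eval_C, Equiv.symm_apply_apply]
      have hrw : κ ed.out.2 - a ed.out.1 ed.out.2 * κ ed.out.1 - b ed.out.1 ed.out.2
          = κ ed.out.2 - σ ed.out.1 ed.out.2 (κ ed.out.1) := by
        rw [hab ed.out.1 ed.out.2 (κ ed.out.1) hadj]; ring
      rw [hrw, sub_ne_zero, ne_comm]
    constructor
    · intro h u v hadj hcontra
      have hed : s(u, v) ∈ G.edgeFinset := by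
        rw [SimpleGraph.mem_edgeFinset, SimpleGraph.mem_edgeSet]; exact hadj
      have hfar := (hfac _ hed).mp (h _ hed)
      have houtuv : (s(u, v)).out = (u, v) ∨ (s(u, v)).out = (v, u) := by
        have h1 : Sym2.mk (s(u, v)).out.1 (s(u, v)).out.2 = s(u, v) := hout _
        rcases (Sym2.mk_eq_mk_iff (p := (s(u, v)).out) (q := (u, v))).mp h1 with h2 | h2
        · exact Or.inl h2
        · exact Or.inr h2
      rcases houtuv with h2 | h2 <;> rw [h2] at hfar
      · exact hfar hcontra
      · apply hfar
        show σ v u (κ v) = κ u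
        rw [hsym u v, ← hcontra]
        exact Equiv.symm_apply_apply _ _
    · intro h ed hed
      exact (hfac ed hed).mpr (h _ _ (hadjout ed hed))
  -- degree bound
  have htot : P.totalDegree ≤ m := by
    rw [hP]
    refine (totalDegree_finset_prod _ _).trans ?_
    have hone : ∀ ed ∈ G.edgeFinset,
        (X (e ed.out.2) - C (a ed.out.1 ed.out.2) * X (e ed.out.1)
          - C (b ed.out.1 ed.out.2)).totalDegree ≤ 1 := by
      intro ed _
      refine (totalDegree_sub _ _).trans (max_le ((totalDegree_sub _ _).trans (max_le ?_ ?_)) ?_)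
      · exact le_of_eq (totalDegree_X _)
      · refine (totalDegree_mul _ _).trans ?_
        rw [totalDegree_C, totalDegree_X]
      · rw [totalDegree_C]; omega
    refine (Finset.sum_le_sum hone).trans (le_of_eq ?_)
    rw [Finset.sum_const, smul_eq_mul, mul_one, hm]
  -- reduce
  obtain ⟨Q, hQeval, hQdeg, hQtot⟩ := exists_reduced hcard hk2 P
  obtain ⟨κ0, hκ0⟩ := hcol σ hsym hSmem
  have hQne : Q ≠ 0 := by
    intro hzero
    have h1 := (hevalP κ0).mpr hκ0
    rw [← hQeval, hzero, map_zero] at h1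
    exact h1 rfl
  have hAF := alon_furedi hcard n Q hQne hQdeg
  set N := (Finset.univ.filter fun x : Fin n → F => MvPolynomial.eval x Q ≠ 0).card with hN
  clear_value N
  -- identify the cardinalities
  have hNat : Nat.card {κ : V → F // ∀ u v, G.Adj u v → σ u v (κ u) ≠ κ v} = N := by
    rw [Nat.card_eq_fintype_card]
    have equiv1 : {κ : V → F // ∀ u v, G.Adj u v → σ u v (κ u) ≠ κ v} ≃
        {x : Fin n → F // MvPolynomial.eval x Q ≠ 0} := by
      apply Equiv.subtypeEquiv (Equiv.arrowCongr e (Equiv.refl F))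
      intro κ
      have harr : (Equiv.arrowCongr e (Equiv.refl F)) κ = fun i => κ (e.symm i) := by
        funext i
        simp [Equiv.arrowCongr]
      rw [harr, hQeval, hevalP κ]
    rw [Fintype.card_congr equiv1, hN, Fintype.card_subtype]
  rw [hNat]
  clear hN hNat
  -- arithmetic
  have hk1R : ((k - 1 : ℕ) : ℝ) = (k : ℝ) - 1 := by
    have h1k : 1 ≤ k := by omega
    rw [Nat.cast_sub h1k]; norm_num
  have hkmn : m ≤ n * (k - 1) := by
    have h1 : (m : ℝ) ≤ ((n * (k - 1) : ℕ) : ℝ) := by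
      push_cast [hk1R]
      rw [mul_comm]
      exact hmn
    exact_mod_cast h1
  set c := n * (k - 1) - m with hc
  clear_value c
  have hNpow : k ^ c ≤ N ^ (k - 1) := by
    have h1 : k ^ (n * (k - 1)) ≤ N ^ (k - 1) * k ^ m :=
      le_trans hAF (Nat.mul_le_mul_left _
        (Nat.pow_le_pow_right (show 1 ≤ k by omega) (hQtot.trans htot)))
    have h2 : k ^ c * k ^ m = k ^ (n * (k - 1)) := by
      rw [← pow_add]
      congr 1
      omega
    have h3 : k ^ c * k ^ m ≤ N ^ (k - 1) * k ^ m := by rw [h2]; exact h1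
    exact Nat.le_of_mul_le_mul_right h3 (Nat.pow_pos (n := m) (show 0 < k by omega))
  have hexp : (n : ℝ) - (m : ℝ) / ((k : ℝ) - 1) = (c : ℝ) / ((k - 1 : ℕ) : ℝ) := by
    rw [hk1R]
    have hcc : (c : ℝ) = (n : ℝ) * ((k : ℝ) - 1) - m := by
      rw [hc, Nat.cast_sub hkmn]
      push_cast [hk1R]
      ring
    rw [hcc]
    have hkne : (k : ℝ) - 1 ≠ 0 := by
      have : (2 : ℝ) ≤ (k : ℝ) := by exact_mod_cast hk2
      linarith
    field_simp
  rw [hexp]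
  have hk0 : (0 : ℝ) < (k : ℝ) := by positivity
  have hbase : (0 : ℝ) ≤ (k : ℝ) ^ ((c : ℝ) / ((k - 1 : ℕ) : ℝ)) := by positivity
  have hNnn : (0 : ℝ) ≤ (N : ℝ) := by positivity
  refine (pow_le_pow_iff_left₀ hbase hNnn (n := k - 1) (show k - 1 ≠ 0 by omega)).mp ?_
  have hlhs : ((k : ℝ) ^ ((c : ℝ) / ((k - 1 : ℕ) : ℝ))) ^ (k - 1) = (k : ℝ) ^ (c : ℕ) := by
    rw [← Real.rpow_natCast ((k : ℝ) ^ ((c : ℝ) / ((k - 1 : ℕ) : ℝ))) (k - 1),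
      ← Real.rpow_mul (le_of_lt hk0)]
    rw [div_mul_cancel₀]
    · rw [Real.rpow_natCast]
    · rw [hk1R]
      have : (2 : ℝ) ≤ (k : ℝ) := by exact_mod_cast hk2
      linarith
  rw [hlhs]
  exact_mod_cast hNpow
end
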